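/- arXiv:2401.01426 — 4 statements merged into one kernel-verified Lean document; each statement's English description precedes it below -/
import Mathlib

section
/- Let G be an ADMG with observed variables 𝒱, let V' and I be subsets of 𝒱, let {C_i} be the c-components of G_{\overline{I}}, let S = 𝒱 \ (V' ∪ Pa(V') ∪ I), S(i) = S ∩ C_i, and C_i^+ = C_i \ (S(i) ∪ Pa(V') ∪ I). Then for any SCM inducing G with strictly positive distribution, the interventional distribution factorizes as P_{Pa(V')∪I}(V') = ∏_i P_{Pa(C_i^+)∪I}(C_i^+). -/
open Classical

noncomputable section

/-- An acyclic directed mixed graph (ADMG): directed edges (causal) and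
bidirected edges (latent confounders). -/
structure ADMG (V : Type) where
  dir : V → V → Prop
  bidir : V → V → Prop
  bidir_symm : ∀ a b, bidir a b → bidir b a
  acyclic : ∀ v, ¬ Relation.TransGen dir v v

namespace ADMG

variable {V : Type} [Fintype V] [DecidableEq V]

/-- Observed parents of a set `W`, outside `W`. -/
def parents (G : ADMG V) (W : Set V) : Set V :=
  {v | v ∉ W ∧ ∃ w ∈ W, G.dir v w}

/-- Observed parents of a finite set `W`, outside `W`. -/
def parentsF (G : ADMG V) (W : Finset V) : Finset V :=
  Finset.univ.filter fun v => v ∉ W ∧ ∃ w ∈ W, G.dir v w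

/-- Ancestors of a set `W` (including `W` itself). -/
def ancestors (G : ADMG V) (W : Set V) : Set V :=
  {v | ∃ w ∈ W, Relation.ReflTransGen G.dir v w}

/-- Ancestors of a finite set `W` (including `W` itself). -/
def ancestorsF (G : ADMG V) (W : Finset V) : Finset V :=
  Finset.univ.filter fun v => ∃ w ∈ W, Relation.ReflTransGen G.dir v w

/-- Bidirected connectivity (paths of bidirected edges). -/
def biConn (G : ADMG V) (a b : V) : Prop :=
  Relation.ReflTransGen G.bidir a b

/-- `C` is a c-component of `G`: a maximal bidirected-connected set. -/
def isCComponent (G : ADMG V) (C : Set V) : Prop :=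
  C.Nonempty ∧ (∀ a ∈ C, ∀ b ∈ C, G.biConn a b) ∧
    ∀ a ∈ C, ∀ b, G.biConn a b → b ∈ C

/-- The set of c-components of `G`. -/
def cComponents (G : ADMG V) : Set (Set V) := {C | G.isCComponent C}

/-- The graph after `do(I)`: incoming directed edges into `I` and bidirected
edges incident to `I` are removed. -/
def doGraph (G : ADMG V) (I : Set V) : ADMG V where
  dir a b := G.dir a b ∧ b ∉ I
  bidir a b := G.bidir a b ∧ a ∉ I ∧ b ∉ I
  bidir_symm := fun a b h => ⟨G.bidir_symm a b h.1, h.2.2, h.2.1⟩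
  acyclic := fun v h => G.acyclic v (Relation.TransGen.mono (fun _ _ hx => hx.1) _ _ h)

/-- The graph with all outgoing directed edges of `X` removed. -/
def underGraph (G : ADMG V) (X : Set V) : ADMG V where
  dir a b := G.dir a b ∧ a ∉ X
  bidir := G.bidir
  bidir_symm := G.bidir_symm
  acyclic := fun v h => G.acyclic v (Relation.TransGen.mono (fun _ _ hx => hx.1) _ _ h)

/-- The induced sub-graph on a vertex set `S`. -/
def induced (G : ADMG V) (S : Set V) : ADMG V where
  dir a b := G.dir a b ∧ a ∈ S ∧ b ∈ S
  bidir a b := G.bidir a b ∧ a ∈ S ∧ b ∈ S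
  bidir_symm := fun a b h => ⟨G.bidir_symm a b h.1, h.2.2, h.2.1⟩
  acyclic := fun v h => G.acyclic v (Relation.TransGen.mono (fun _ _ hx => hx.1) _ _ h)

/-- Adjacency in the mixed graph. -/
def adjacent (G : ADMG V) (a b : V) : Prop := G.dir a b ∨ G.dir b a ∨ G.bidir a b

/-- The edge between `a` and `b` points into `b`. -/
def intoEdge (G : ADMG V) (a b : V) : Prop := G.dir a b ∨ G.bidir a b

/-- `b` is a collider on the consecutive triple `a, b, c`. -/
def isCollider (G : ADMG V) (a b c : V) : Prop := G.intoEdge a b ∧ G.intoEdge c b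

/-- A walk (list of vertices) that is active given the conditioning set `Z`:
non-colliders avoid `Z`, colliders have a descendant in `Z`. -/
def ActiveWalk (G : ADMG V) (Z : Set V) (p : List V) : Prop :=
  p.Chain' G.adjacent ∧
    ∀ i a b c, p[i]? = some a → p[i + 1]? = some b → p[i + 2]? = some c →
      (G.isCollider a b c → ∃ z ∈ Z, Relation.ReflTransGen G.dir b z) ∧
      (¬ G.isCollider a b c → b ∉ Z)

/-- d-connection of `X` and `Y` given `Z` in the mixed graph (m-connection). -/
def dConnected (G : ADMG V) (X Y Z : Set V) : Prop :=
  ∃ p : List V, G.ActiveWalk Z p ∧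
    (∃ x ∈ X, p.head? = some x) ∧ ∃ y ∈ Y, p.getLast? = some y

/-- d-separation of `X` and `Y` given `Z`. -/
def dSeparated (G : ADMG V) (X Y Z : Set V) : Prop := ¬ G.dConnected X Y Z

end ADMG

/-- A (semi-Markovian) structural causal model over the ADMG `G`, with observed
variables valued in `Val`: independent finite latents `L`, mechanisms `f`
reading only observed parents and own latents (shared latents forcing a
bidirected edge), and the solution map of the structural equations under an
intervention. -/
structure SCM (V : Type) (Val : Type) [Fintype V] [DecidableEq V] [Fintype Val]
    (G : ADMG V) where
  L : Type
  [fintL : Fintype L]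
  [decL : DecidableEq L]
  NVal : Type
  [fintN : Fintype NVal]
  ν : L → NVal → ℝ
  ν_nonneg : ∀ l x, 0 ≤ ν l x
  ν_sum : ∀ l, ∑ x, ν l x = 1
  reads : V → L → Prop
  semiMarkov : ∀ v w l, v ≠ w → reads v l → reads w l → G.bidir v w
  f : V → (V → Val) → (L → NVal) → Val
  f_parents : ∀ v x y ω, (∀ p, G.dir p v → x p = y p) → f v x ω = f v y ω
  f_latents : ∀ v x ω ω', (∀ l, reads v l → ω l = ω' l) → f v x ω = f v x ω'
  solve : Finset V → (V → Val) → (L → NVal) → V → Val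
  solve_spec : ∀ I x ω v,
    solve I x ω v = if v ∈ I then x v else f v (solve I x ω) ω

namespace SCM

attribute [instance] SCM.fintL SCM.decL SCM.fintN

variable {V Val : Type} [Fintype V] [DecidableEq V] [Fintype Val] {G : ADMG V}

/-- Probability of a full latent configuration (latents are independent). -/
def μ (M : SCM V Val G) (ω : M.L → M.NVal) : ℝ := ∏ l, M.ν l (ω l)

/-- The interventional distribution `P(y | do(I := x))` (observational for `I = ∅`). -/
def P (M : SCM V Val G) (I : Finset V) (x : V → Val) (y : V → Val) : ℝ :=
  ∑ ω : M.L → M.NVal, if M.solve I x ω = y then M.μ ω else 0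

/-- The marginal interventional distribution `P(S = y|_S | do(I := x))`. -/
def Pm (M : SCM V Val G) (I : Finset V) (x : V → Val) (S : Finset V) (y : V → Val) : ℝ :=
  ∑ z : V → Val, if ∀ v ∈ S, z v = y v then M.P I x z else 0

/-- The conditional distribution `P(S = y|_S | C = y|_C, do(I := x))`. -/
def cond (M : SCM V Val G) (I : Finset V) (x : V → Val) (S C : Finset V)
    (y : V → Val) : ℝ :=
  M.Pm I x (S ∪ C) y / M.Pm I x C y

/-- Strict positivity of the induced observational distribution. -/
def positive (M : SCM V Val G) : Prop := ∀ x y, 0 < M.P ∅ x y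

end SCM

end


section TianAux

open Finset

/-- Sum over a pi type of a product factorizes into a product of sums. -/
lemma pi_sum_prod {ι : Type} [Fintype ι] [DecidableEq ι] {β : ι → Type}
    [∀ i, Fintype (β i)] (g : ∀ i, β i → ℝ) :
    ∑ f : ∀ i, β i, ∏ i, g i (f i) = ∏ i, ∑ b, g i b :=
  (Fintype.prod_sum g).symm

/-- Independence factorization: if each `g i` depends only on the coordinates in
its own group (fiber of `σ`), the expectation of the product is the product of
expectations. -/
lemma factor_groups {L N : Type} [Fintype L] [DecidableEq L] [Fintype N]
    (hN : L → Nonempty N)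
    (ν : L → N → ℝ) (hν : ∀ l, ∑ x, ν l x = 1) {m : ℕ} (σ : L → Fin m)
    (g : Fin m → (L → N) → ℝ)
    (hg : ∀ i ω ω', (∀ l, σ l = i → ω l = ω' l) → g i ω = g i ω') :
    ∑ ω : L → N, (∏ l, ν l (ω l)) * ∏ i, g i ω
      = ∏ i, ∑ ω : L → N, (∏ l, ν l (ω l)) * g i ω := by
  classical
  set E : (L → N) ≃ (∀ i : Fin m, {l // σ l = i} → N) :=
    { toFun := fun ω i l => ω l.1
      invFun := fun u l => u (σ l) ⟨l, rfl⟩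
      left_inv := fun ω => rfl
      right_inv := by
        intro u; funext i l
        obtain ⟨l, hl⟩ := l; subst hl; rfl } with hE
  set ext : ∀ i : Fin m, ({l // σ l = i} → N) → (L → N) :=
    fun i u l => if h : σ l = i then u ⟨l, h⟩ else (hN l).some with hext
  have key1 : ∀ i ω, g i ω = g i (ext i (fun l => ω l.1)) := by
    intro i ω
    apply hg
    intro l hl
    simp [hext, hl]
  have key2 : ∀ ω : L → N, (∏ l, ν l (ω l))
      = ∏ i, ∏ l : {l // σ l = i}, ν l.1 (ω l.1) := by
    intro ω
    have hs := Finset.prod_sigma (Finset.univ : Finset (Fin m))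
      (fun i => (Finset.univ : Finset {l // σ l = i})) (fun p => ν p.2.1 (ω p.2.1))
    rw [Finset.univ_sigma_univ] at hs
    rw [← hs]
    exact (Fintype.prod_equiv (Equiv.sigmaFiberEquiv σ)
      (fun p => ν p.2.1 (ω p.2.1)) (fun l => ν l (ω l)) (fun p => rfl)).symm
  have unit : ∀ j : Fin m, ∑ u : {l // σ l = j} → N, ∏ l, ν l.1 (u l) = 1 := by
    intro j
    rw [pi_sum_prod]
    simp [hν]
  -- the per-group factors
  set G' : ∀ i : Fin m, ({l // σ l = i} → N) → ℝ :=
    fun i u => (∏ l, ν l.1 (u l)) * g i (ext i u) with hG'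
  have hsum : ∀ (F : Fin m → (L → N) → ℝ),
      (∀ ω i, F i ω = F i (ext i (fun l => ω l.1))) →
      ∑ ω : L → N, ∏ i, (∏ l : {l // σ l = i}, ν l.1 (ω l.1)) * F i ω
        = ∏ i, ∑ u : {l // σ l = i} → N, (∏ l, ν l.1 (u l)) * F i (ext i u) := by
    intro F hF
    rw [← pi_sum_prod]
    apply Fintype.sum_equiv E
    intro ω
    refine Finset.prod_congr rfl fun i _ => ?_
    show (∏ l : {l // σ l = i}, ν l.1 (ω l.1)) * F i ω
        = (∏ l : {l // σ l = i}, ν l.1 (ω l.1)) * F i (ext i fun l => ω l.1)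
    rw [← hF ω i]
  have left : ∑ ω : L → N, (∏ l, ν l (ω l)) * ∏ i, g i ω
      = ∏ i, ∑ u : {l // σ l = i} → N, G' i u := by
    rw [← hsum g (fun ω i => key1 i ω)]
    apply Finset.sum_congr rfl
    intro ω _
    rw [key2 ω, ← Finset.prod_mul_distrib]
  have right : ∀ i : Fin m, ∑ ω : L → N, (∏ l, ν l (ω l)) * g i ω
      = ∑ u : {l // σ l = i} → N, G' i u := by
    intro i
    have hF : ∀ (ω : L → N) (j : Fin m),
        (if j = i then g i ω else 1) = (if j = i then g i (ext j (fun l => ω l.1)) else 1) := by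
      intro ω j
      by_cases h : j = i
      · subst h; simp [key1 j ω]
      · simp [h]
    calc ∑ ω : L → N, (∏ l, ν l (ω l)) * g i ω
        = ∑ ω : L → N, ∏ j, (∏ l : {l // σ l = j}, ν l.1 (ω l.1)) *
            (if j = i then g i ω else 1) := by
          apply Finset.sum_congr rfl
          intro ω _
          rw [Finset.prod_mul_distrib, ← key2 ω,
            Finset.prod_ite_eq' Finset.univ i (fun _ => g i ω)]
          simp
      _ = ∏ j, ∑ u : {l // σ l = j} → N, (∏ l, ν l.1 (u l)) *
            (if j = i then g i (ext j u) else 1) := by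
          rw [hsum (fun j ω => if j = i then g i ω else 1) hF]
      _ = ∑ u : {l // σ l = i} → N, G' i u := by
          rw [Finset.prod_eq_single i]
          · simp [hG']
          · intro j _ hj
            simp [hj, unit j]
          · simp
  rw [left]
  exact Finset.prod_congr rfl fun i _ => (right i).symm

variable {V Val : Type} [Fintype V] [DecidableEq V] [Fintype Val] {G : ADMG V}

lemma mem_parentsF (v : V) (A : Finset V) :
    v ∈ G.parentsF A ↔ v ∉ A ∧ ∃ w ∈ A, G.dir v w := by
  simp [ADMG.parentsF]

/-- Key reduction: when every parent of a non-intervened member of `W` lies in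
`J ∪ W`, the marginal `Pm J y W y` is the expectation of the product of the
local mechanism indicators. -/
lemma pm_eq (M : SCM V Val G) (y : V → Val) (J W : Finset V)
    (hW : ∀ v ∈ W, v ∉ J → ∀ p, G.dir p v → p ∈ J ∨ p ∈ W) :
    M.Pm J y W y = ∑ ω : M.L → M.NVal,
      M.μ ω * ∏ v ∈ W \ J, (if M.f v y ω = y v then (1:ℝ) else 0) := by
  classical
  have hsolveJ : ∀ (ω : M.L → M.NVal) (v : V), v ∈ J → M.solve J y ω v = y v := by
    intro ω v hv; rw [M.solve_spec]; simp [hv]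
  have wf : WellFounded (fun a b : V => Relation.TransGen G.dir a b) := by
    have h1 : IsTrans V (fun a b : V => Relation.TransGen G.dir a b) :=
      ⟨fun _ _ _ => Relation.TransGen.trans⟩
    have h2 : IsIrrefl V (fun a b : V => Relation.TransGen G.dir a b) := ⟨G.acyclic⟩
    exact Finite.wellFounded_of_trans_of_irrefl _
  have hiff : ∀ ω : M.L → M.NVal,
      (∀ v ∈ W, M.solve J y ω v = y v) ↔ (∀ v ∈ W \ J, M.f v y ω = y v) := by
    intro ω
    constructor
    · intro h v hv
      rw [Finset.mem_sdiff] at hv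
      obtain ⟨hvW, hvJ⟩ := hv
      have hs := h v hvW
      rw [M.solve_spec, if_neg hvJ] at hs
      rw [← hs]
      apply (M.f_parents v (M.solve J y ω) y ω ?_).symm
      intro p hp
      rcases hW v hvW hvJ p hp with hpJ | hpW
      · exact hsolveJ ω p hpJ
      · exact h p hpW
    · intro h
      have main : ∀ v, v ∈ W → M.solve J y ω v = y v := by
        intro v
        refine WellFounded.induction wf
          (C := fun v => v ∈ W → M.solve J y ω v = y v) v ?_
        intro v ih hv
        by_cases hvJ : v ∈ J
        · exact hsolveJ ω v hvJ
        · rw [M.solve_spec, if_neg hvJ]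
          have heq : M.f v (M.solve J y ω) ω = M.f v y ω := by
            apply M.f_parents
            intro p hp
            rcases hW v hv hvJ p hp with hpJ | hpW
            · exact hsolveJ ω p hpJ
            · exact ih p (Relation.TransGen.single hp) hpW
          rw [heq]
          exact h v (Finset.mem_sdiff.mpr ⟨hv, hvJ⟩)
      exact main
  calc M.Pm J y W y
      = ∑ z : V → Val, ∑ ω : M.L → M.NVal,
          if ∀ v ∈ W, z v = y v then (if M.solve J y ω = z then M.μ ω else 0) else 0 := by
        unfold SCM.Pm SCM.P
        apply Finset.sum_congr rfl
        intro z _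
        split <;> simp
    _ = ∑ ω : M.L → M.NVal, ∑ z : V → Val,
          if ∀ v ∈ W, z v = y v then (if M.solve J y ω = z then M.μ ω else 0) else 0 :=
        Finset.sum_comm
    _ = ∑ ω : M.L → M.NVal,
          if ∀ v ∈ W, M.solve J y ω v = y v then M.μ ω else 0 := by
        apply Finset.sum_congr rfl
        intro ω _
        rw [Finset.sum_eq_single_of_mem (M.solve J y ω) (Finset.mem_univ _)]
        · simp
        · intro b _ hb
          simp [Ne.symm hb]
    _ = ∑ ω : M.L → M.NVal,
          M.μ ω * ∏ v ∈ W \ J, (if M.f v y ω = y v then (1:ℝ) else 0) := by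
        apply Finset.sum_congr rfl
        intro ω _
        rw [Finset.prod_boole]
        by_cases h : ∀ v ∈ W \ J, M.f v y ω = y v
        · rw [if_pos h, if_pos ((hiff ω).mpr h), mul_one]
        · rw [if_neg h, if_neg (fun h' => h ((hiff ω).mp h')), mul_zero]

end TianAux


/-- The set `C_i^+` from the theorem statement. -/
noncomputable def Wplus {V : Type} [Fintype V] [DecidableEq V] (G : ADMG V) (V' I : Finset V)
    {n : ℕ} (C : Fin n → Finset V) (i : Fin n) : Finset V :=
  C i \ (((Finset.univ \ (V' ∪ G.parentsF V' ∪ I)) ∩ C i) ∪ G.parentsF V' ∪ I)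


/-- Tian's factorization for a sub-graph under intervention:
`P_{Pa(V') ∪ I}(V') = ∏_i P_{Pa(C_i^+) ∪ I}(C_i^+)` where `C_i` are the
c-components of `G_{do(I)}`, `S = 𝒱 \ (V' ∪ Pa(V') ∪ I)`, `S(i) = S ∩ C_i`,
and `C_i^+ = C_i \ (S(i) ∪ Pa(V') ∪ I)`. -/
theorem subgraph_c_factorization
    {V Val : Type} [Fintype V] [DecidableEq V] [Fintype Val]
    (G : ADMG V) (V' I : Finset V) {n : ℕ} (C : Fin n → Finset V)
    (hcc : ∀ i, (G.doGraph ↑I).isCComponent ↑(C i))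
    (hdisj : ∀ i j, i ≠ j → Disjoint (C i) (C j))
    (hcover : ∀ v : V, ∃ i, v ∈ C i)
    (M : SCM V Val G) (hpos : M.positive) (y : V → Val) :
    M.Pm (G.parentsF V' ∪ I) y V' y =
      ∏ i : Fin n,
        M.Pm
          (G.parentsF
              (C i \ (((Finset.univ \ (V' ∪ G.parentsF V' ∪ I)) ∩ C i) ∪ G.parentsF V' ∪ I))
            ∪ I)
          y
          (C i \ (((Finset.univ \ (V' ∪ G.parentsF V' ∪ I)) ∩ C i) ∪ G.parentsF V' ∪ I))
          y := by
  classical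
  show M.Pm (G.parentsF V' ∪ I) y V' y =
    ∏ i : Fin n, M.Pm (G.parentsF (Wplus G V' I C i) ∪ I) y (Wplus G V' I C i) y
  set W : Fin n → Finset V := Wplus G V' I C with hWdef
  have hWmem : ∀ i v, v ∈ W i ↔ v ∈ C i ∧ v ∈ V' ∧ v ∉ G.parentsF V' ∧ v ∉ I := by
    intro i v
    simp only [hWdef, Wplus, Finset.mem_sdiff, Finset.mem_union, Finset.mem_inter,
      Finset.mem_univ, true_and]
    tauto
  have hN : M.L → Nonempty M.NVal := by
    intro l
    by_contra hne
    rw [not_nonempty_iff] at hne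
    have h1 := M.ν_sum l
    rw [Finset.univ_eq_empty, Finset.sum_empty] at h1
    exact one_ne_zero h1.symm
  -- latents read by a non-intervened vertex determine its c-component
  have huniq : ∀ (l : M.L) (i j : Fin n) (v w : V), v ∈ C i → v ∉ I → M.reads v l →
      w ∈ C j → w ∉ I → M.reads w l → i = j := by
    intro l i j v w hvC hvI hvl hwC hwI hwl
    by_contra hij
    have hvCj : v ∈ C j := by
      by_cases hvw : v = w
      · subst hvw; exact hwC
      · have hb : G.bidir w v := M.semiMarkov w v l (fun h => hvw h.symm) hwl hvl
        have hb' : (G.doGraph ↑I).bidir w v :=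
          ⟨hb, by simpa using hwI, by simpa using hvI⟩
        have hv' : (v : V) ∈ (↑(C j) : Set V) :=
          (hcc j).2.2 w (by simpa using hwC) v (Relation.ReflTransGen.single hb')
        simpa using hv'
    exact (Finset.disjoint_left.mp (hdisj i j hij) hvC) hvCj
  set σ : M.L → Fin (n+1) := fun l =>
    if h : ∃ j : Fin n, ∃ w, w ∈ C j ∧ w ∉ I ∧ M.reads w l
    then (Classical.choose h).castSucc else Fin.last n with hσ
  have hσW : ∀ (i : Fin n) (v : V), v ∈ W i → ∀ l, M.reads v l → σ l = i.castSucc := by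
    intro i v hv l hvl
    have hmem := (hWmem i v).mp hv
    have hex : ∃ j : Fin n, ∃ w, w ∈ C j ∧ w ∉ I ∧ M.reads w l :=
      ⟨i, v, hmem.1, hmem.2.2.2, hvl⟩
    simp only [hσ]
    rw [dif_pos hex]
    obtain ⟨w, hwC, hwI, hwl⟩ := Classical.choose_spec hex
    rw [huniq l (Classical.choose hex) i w v hwC hwI hwl hmem.1 hmem.2.2.2 hvl]
  set g : Fin (n+1) → (M.L → M.NVal) → ℝ := fun j ω =>
    if h : (j : ℕ) < n then ∏ v ∈ W ⟨j, h⟩, (if M.f v y ω = y v then (1:ℝ) else 0)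
    else 1 with hgdef
  have hcast : ∀ i : Fin n, (⟨((i.castSucc : Fin (n+1)) : ℕ), by simpa using i.is_lt⟩ : Fin n) = i := by
    intro i; apply Fin.ext; simp
  have hgcast : ∀ (i : Fin n) ω,
      g i.castSucc ω = ∏ v ∈ W i, (if M.f v y ω = y v then (1:ℝ) else 0) := by
    intro i ω
    simp only [hgdef]
    rw [dif_pos (by simpa using i.is_lt : ((i.castSucc : Fin (n+1)) : ℕ) < n), hcast i]
  have hglast : ∀ ω, g (Fin.last n) ω = 1 := by
    intro ω; simp [hgdef]
  have hgdep : ∀ (j : Fin (n+1)) ω ω', (∀ l, σ l = j → ω l = ω' l) → g j ω = g j ω' := by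
    intro j ω ω' hagree
    simp only [hgdef]
    by_cases h : (j : ℕ) < n
    · rw [dif_pos h, dif_pos h]
      apply Finset.prod_congr rfl
      intro v hv
      have hf : M.f v y ω = M.f v y ω' := by
        apply M.f_latents
        intro l hl
        apply hagree
        rw [hσW ⟨j, h⟩ v hv l hl]
        apply Fin.ext; simp
      rw [hf]
    · rw [dif_neg h, dif_neg h]
  have musum : ∑ ω : M.L → M.NVal, M.μ ω = 1 := by
    unfold SCM.μ
    rw [pi_sum_prod (fun l (x : M.NVal) => M.ν l x)]
    simp [M.ν_sum]
  have main := factor_groups hN M.ν M.ν_sum σ g hgdep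
  -- reduce LHS
  have hWsub : ∀ v ∈ V', v ∉ G.parentsF V' ∪ I →
      ∀ p, G.dir p v → p ∈ G.parentsF V' ∪ I ∨ p ∈ V' := by
    intro v hv _ p hp
    by_cases hpV : p ∈ V'
    · exact Or.inr hpV
    · exact Or.inl (Finset.mem_union_left _ ((mem_parentsF p V').mpr ⟨hpV, v, hv, hp⟩))
  have hLHS := pm_eq M y (G.parentsF V' ∪ I) V' hWsub
  have hT : V' \ (G.parentsF V' ∪ I) = Finset.univ.biUnion W := by
    ext v
    simp only [Finset.mem_biUnion, Finset.mem_univ, true_and]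
    constructor
    · intro hv
      obtain ⟨i, hi⟩ := hcover v
      rw [Finset.mem_sdiff, Finset.mem_union] at hv
      exact ⟨i, (hWmem i v).mpr ⟨hi, hv.1, fun h => hv.2 (Or.inl h), fun h => hv.2 (Or.inr h)⟩⟩
    · rintro ⟨i, hi⟩
      have hm := (hWmem i v).mp hi
      rw [Finset.mem_sdiff, Finset.mem_union]
      exact ⟨hm.2.1, fun h => h.elim hm.2.2.1 hm.2.2.2⟩
  have hdisjW : (↑(Finset.univ : Finset (Fin n)) : Set (Fin n)).PairwiseDisjoint W := by
    intro i _ j _ hij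
    exact Finset.disjoint_left.mpr (fun v hvi hvj =>
      Finset.disjoint_left.mp (hdisj i j hij) ((hWmem i v).mp hvi).1 ((hWmem j v).mp hvj).1)
  have hRHSi : ∀ i : Fin n, M.Pm (G.parentsF (W i) ∪ I) y (W i) y
      = ∑ ω : M.L → M.NVal, M.μ ω * ∏ v ∈ W i, (if M.f v y ω = y v then (1:ℝ) else 0) := by
    intro i
    have h1 : ∀ v ∈ W i, v ∉ G.parentsF (W i) ∪ I →
        ∀ p, G.dir p v → p ∈ G.parentsF (W i) ∪ I ∨ p ∈ W i := by
      intro v hv _ p hp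
      by_cases hpW : p ∈ W i
      · exact Or.inr hpW
      · exact Or.inl (Finset.mem_union_left _ ((mem_parentsF p (W i)).mpr ⟨hpW, v, hv, hp⟩))
    have h2 : W i \ (G.parentsF (W i) ∪ I) = W i := by
      ext v
      rw [Finset.mem_sdiff, Finset.mem_union]
      constructor
      · exact fun h => h.1
      · intro hv
        refine ⟨hv, fun h => ?_⟩
        rcases h with h | h
        · exact ((mem_parentsF v (W i)).mp h).1 hv
        · exact ((hWmem i v).mp hv).2.2.2 h
    rw [pm_eq M y (G.parentsF (W i) ∪ I) (W i) h1, h2]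
  calc M.Pm (G.parentsF V' ∪ I) y V' y
      = ∑ ω : M.L → M.NVal, (∏ l, M.ν l (ω l)) * ∏ j : Fin (n+1), g j ω := by
        rw [hLHS, hT]
        apply Finset.sum_congr rfl
        intro ω _
        rw [Finset.prod_biUnion hdisjW, Fin.prod_univ_castSucc, hglast ω, mul_one]
        show M.μ ω * _ = _
        unfold SCM.μ
        congr 1
        exact Finset.prod_congr rfl fun i _ => (hgcast i ω).symm
    _ = ∏ j : Fin (n+1), ∑ ω : M.L → M.NVal, (∏ l, M.ν l (ω l)) * g j ω := main
    _ = ∏ i : Fin n, M.Pm (G.parentsF (W i) ∪ I) y (W i) y := by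
        rw [Fin.prod_univ_castSucc]
        have hlast : ∑ ω : M.L → M.NVal, (∏ l, M.ν l (ω l)) * g (Fin.last n) ω = 1 := by
          simp only [hglast, mul_one]
          exact musum
        rw [hlast, mul_one]
        apply Finset.prod_congr rfl
        intro i _
        rw [hRHSi i]
        apply Finset.sum_congr rfl
        intro ω _
        rw [hgcast i ω]
        rfl
end

section
/- Let G be an ADMG with c-components 𝒞 = {C_1,…,C_t}, and let H be a node of an H-graph for G, i.e., H is a union of c-components {C_i}_{i∈T} for some T ⊆ [t]. Then for any SCM inducing G, the c-factor of H satisfies P_{Pa(H)}(H) = ∏_{i∈T} P_{Pa(C_i)}(C_i), where Pa(H) denotes the observed parents of H outside H. -/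
open Classical

section Aux

variable {V Val : Type} [Fintype V] [DecidableEq V] [Fintype Val] {G : ADMG V}

/-- The latent distribution sums to one. -/
lemma SCM.sum_mu (M : SCM V Val G) : ∑ ω : M.L → M.NVal, M.μ ω = 1 := by
  classical
  unfold SCM.μ
  rw [← Fintype.piFinset_univ, Finset.sum_prod_piFinset]
  simp [M.ν_sum]

instance : IsTrans V (Relation.TransGen G.dir) := ⟨fun _ _ _ => Relation.TransGen.trans⟩

/-- Under `do(Pa(S) := y)`, the solution agrees with `y` on `S` iff every
mechanism of `S` reproduces `y`. -/
lemma SCM.solve_parents_iff (M : SCM V Val G) (S : Finset V) (y : V → Val)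
    (ω : M.L → M.NVal) :
    (∀ v ∈ S, M.solve (G.parentsF S) y ω v = y v) ↔ (∀ v ∈ S, M.f v y ω = y v) := by
  have hnotI : ∀ v ∈ S, v ∉ G.parentsF S := fun v hv hmem =>
    ((Finset.mem_filter.mp hmem).2.1) hv
  have hI : ∀ p ∈ G.parentsF S, M.solve (G.parentsF S) y ω p = y p := by
    intro p hp; rw [M.solve_spec, if_pos hp]
  constructor
  · intro h v hv
    have h1 := M.solve_spec (G.parentsF S) y ω v
    rw [if_neg (hnotI v hv)] at h1
    have h2 : M.f v (M.solve (G.parentsF S) y ω) ω = M.f v y ω := by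
      apply M.f_parents
      intro p hpv
      by_cases hpS : p ∈ S
      · exact h p hpS
      · exact hI p (Finset.mem_filter.mpr ⟨Finset.mem_univ _, hpS, v, hv, hpv⟩)
    rw [← h2, ← h1]; exact h v hv
  · intro h
    have hirr : IsIrrefl V (Relation.TransGen G.dir) := ⟨fun v hv => G.acyclic v hv⟩
    have wf : WellFounded (Relation.TransGen G.dir) :=
      Finite.wellFounded_of_trans_of_irrefl _
    intro v
    induction v using wf.induction with
    | _ v ih =>
      intro hv
      rw [M.solve_spec, if_neg (hnotI v hv)]
      have h2 : M.f v (M.solve (G.parentsF S) y ω) ω = M.f v y ω := by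
        apply M.f_parents
        intro p hpv
        by_cases hpS : p ∈ S
        · exact ih p (Relation.TransGen.single hpv) hpS
        · exact hI p (Finset.mem_filter.mpr ⟨Finset.mem_univ _, hpS, v, hv, hpv⟩)
      rw [h2]; exact h v hv

/-- The c-factor of `S` as an expectation of a mechanism indicator. -/
lemma SCM.Pm_parents_eq (M : SCM V Val G) (S : Finset V) (y : V → Val) :
    M.Pm (G.parentsF S) y S y
      = ∑ ω : M.L → M.NVal, if ∀ v ∈ S, M.f v y ω = y v then M.μ ω else 0 := by
  classical
  simp only [SCM.Pm, SCM.P]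
  have step1 : ∀ z : V → Val,
      (if ∀ v ∈ S, z v = y v then
          (∑ ω : M.L → M.NVal, if M.solve (G.parentsF S) y ω = z then M.μ ω else 0)
        else 0)
      = ∑ ω : M.L → M.NVal,
          if (∀ v ∈ S, z v = y v) ∧ M.solve (G.parentsF S) y ω = z then M.μ ω else 0 := by
    intro z
    split
    · next h =>
        refine Finset.sum_congr rfl fun ω _ => ?_
        by_cases h2 : M.solve (G.parentsF S) y ω = z
        · rw [if_pos h2, if_pos ⟨h, h2⟩]
        · rw [if_neg h2, if_neg fun hc => h2 hc.2]
    · next h =>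
        exact (Finset.sum_eq_zero fun ω _ => if_neg fun hc => h hc.1).symm
  rw [Finset.sum_congr rfl fun z _ => step1 z, Finset.sum_comm]
  refine Finset.sum_congr rfl fun ω _ => ?_
  rw [Finset.sum_eq_single (M.solve (G.parentsF S) y ω)]
  · have hiff := M.solve_parents_iff S y ω
    by_cases h : ∀ v ∈ S, M.f v y ω = y v
    · rw [if_pos ⟨hiff.mpr h, rfl⟩, if_pos h]
    · rw [if_neg, if_neg h]
      rintro ⟨h1, -⟩; exact h (hiff.mp h1)
  · intro z _ hz
    rw [if_neg]; rintro ⟨-, h2⟩; exact hz h2.symm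
  · intro h; exact absurd (Finset.mem_univ _) h

/-- Independence: if `A` depends only on latents satisfying `p` and `B` only on
the other latents, their expectations multiply. -/
lemma SCM.indep_mul (M : SCM V Val G) (p : M.L → Prop)
    (A B : (M.L → M.NVal) → ℝ)
    (hA : ∀ ω ω', (∀ l, p l → ω l = ω' l) → A ω = A ω')
    (hB : ∀ ω ω', (∀ l, ¬ p l → ω l = ω' l) → B ω = B ω') :
    ∑ ω : M.L → M.NVal, M.μ ω * (A ω * B ω)
      = (∑ ω : M.L → M.NVal, M.μ ω * A ω) * ∑ ω : M.L → M.NVal, M.μ ω * B ω := by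
  classical
  set cmb : (M.L → M.NVal) → (M.L → M.NVal) → (M.L → M.NVal) :=
    fun ω ω' l => if p l then ω l else ω' l with hcmb
  have hinv : ∀ ω ω' : M.L → M.NVal, cmb (cmb ω ω') (cmb ω' ω) = ω := by
    intro ω ω'; funext l; by_cases h : p l <;> simp [hcmb, h]
  set e : ((M.L → M.NVal) × (M.L → M.NVal)) ≃ ((M.L → M.NVal) × (M.L → M.NVal)) :=
    { toFun := fun q => (cmb q.1 q.2, cmb q.2 q.1)
      invFun := fun q => (cmb q.1 q.2, cmb q.2 q.1)
      left_inv := fun q => Prod.ext (hinv q.1 q.2) (hinv q.2 q.1)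
      right_inv := fun q => Prod.ext (hinv q.1 q.2) (hinv q.2 q.1) } with he
  have hmu : ∀ ω ω' : M.L → M.NVal, M.μ (cmb ω ω') * M.μ (cmb ω' ω) = M.μ ω * M.μ ω' := by
    intro ω ω'
    simp only [SCM.μ, ← Finset.prod_mul_distrib]
    refine Finset.prod_congr rfl fun l _ => ?_
    by_cases h : p l <;> simp [hcmb, h, mul_comm]
  have hA' : ∀ ω ω' : M.L → M.NVal, A (cmb ω ω') = A ω := by
    intro ω ω'; apply hA; intro l hl; simp [hcmb, hl]
  have hB' : ∀ ω ω' : M.L → M.NVal, B (cmb ω' ω) = B ω := by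
    intro ω ω'; apply hB; intro l hl; simp [hcmb, hl]
  have key : ∑ q : (M.L → M.NVal) × (M.L → M.NVal), (M.μ q.1 * (A q.1 * B q.1)) * M.μ q.2
      = ∑ q : (M.L → M.NVal) × (M.L → M.NVal), (M.μ q.1 * A q.1) * (M.μ q.2 * B q.2) := by
    rw [← Equiv.sum_comp e fun q => (M.μ q.1 * A q.1) * (M.μ q.2 * B q.2)]
    refine Finset.sum_congr rfl fun q _ => ?_
    show M.μ q.1 * (A q.1 * B q.1) * M.μ q.2
        = (M.μ (cmb q.1 q.2) * A (cmb q.1 q.2)) * (M.μ (cmb q.2 q.1) * B (cmb q.2 q.1))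
    calc M.μ q.1 * (A q.1 * B q.1) * M.μ q.2
        = (M.μ q.1 * M.μ q.2) * (A q.1 * B q.1) := by ring
      _ = (M.μ (cmb q.1 q.2) * M.μ (cmb q.2 q.1)) * (A q.1 * B q.1) := by rw [hmu]
      _ = (M.μ (cmb q.1 q.2) * A (cmb q.1 q.2)) * (M.μ (cmb q.2 q.1) * B (cmb q.2 q.1)) := by
          rw [hA', hB']; ring
  calc ∑ ω : M.L → M.NVal, M.μ ω * (A ω * B ω)
      = (∑ ω : M.L → M.NVal, M.μ ω * (A ω * B ω)) * ∑ ω : M.L → M.NVal, M.μ ω := by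
        rw [M.sum_mu, mul_one]
    _ = ∑ q : (M.L → M.NVal) × (M.L → M.NVal), (M.μ q.1 * (A q.1 * B q.1)) * M.μ q.2 := by
        rw [Finset.sum_mul_sum, ← Fintype.sum_prod_type']
    _ = ∑ q : (M.L → M.NVal) × (M.L → M.NVal), (M.μ q.1 * A q.1) * (M.μ q.2 * B q.2) := key
    _ = (∑ ω : M.L → M.NVal, M.μ ω * A ω) * ∑ ω : M.L → M.NVal, M.μ ω * B ω := by
        rw [Finset.sum_mul_sum, ← Fintype.sum_prod_type']

end Aux


/-- the c-factor of an h-node `H` (a union of c-components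
`{C_i}_{i ∈ T}`) factorizes as the product of the c-factors of its
c-components: `P_{Pa(H)}(H) = ∏_{i ∈ T} P_{Pa(C_i)}(C_i)`. -/
theorem hnode_c_factor_eq_prod_c_factors
    {V Val : Type} [Fintype V] [DecidableEq V] [Fintype Val]
    (G : ADMG V) {n : ℕ} (C : Fin n → Finset V)
    (hcc : ∀ i, G.isCComponent ↑(C i))
    (hdisj : ∀ i j, i ≠ j → Disjoint (C i) (C j))
    (hcover : ∀ v : V, ∃ i, v ∈ C i)
    (T : Finset (Fin n)) (H : Finset V) (hH : H = T.biUnion C)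
    (M : SCM V Val G) (y : V → Val) :
    M.Pm (G.parentsF H) y H y = ∏ i ∈ T, M.Pm (G.parentsF (C i)) y (C i) y := by
  classical
  subst hH
  -- latents read in different c-components are distinct
  have hread : ∀ i j, i ≠ j → ∀ v ∈ C i, ∀ l, M.reads v l → ¬ ∃ w ∈ C j, M.reads w l := by
    rintro i j hij v hv l hvl ⟨w, hw, hwl⟩
    have hwCi : w ∈ C i := by
      by_cases hvw : v = w
      · exact hvw ▸ hv
      · have hb : G.biConn v w :=
          Relation.ReflTransGen.single (M.semiMarkov v w l hvw hvl hwl)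
        have := (hcc i).2.2 v (by exact_mod_cast hv) w hb
        exact_mod_cast this
    exact (Finset.disjoint_left.mp (hdisj i j hij)) hwCi hw
  set g : Fin n → (M.L → M.NVal) → ℝ :=
    fun i ω => if ∀ v ∈ C i, M.f v y ω = y v then 1 else 0 with hg
  have gcong : ∀ i (ω ω' : M.L → M.NVal),
      (∀ v ∈ C i, M.f v y ω = M.f v y ω') → g i ω = g i ω' := by
    intro i ω ω' hf
    simp only [hg]
    have hc : (∀ v ∈ C i, M.f v y ω = y v) ↔ (∀ v ∈ C i, M.f v y ω' = y v) :=
      forall₂_congr fun v hv => by rw [hf v hv]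
    by_cases h : ∀ v ∈ C i, M.f v y ω = y v
    · rw [if_pos h, if_pos (hc.mp h)]
    · rw [if_neg h, if_neg fun hh => h (hc.mpr hh)]
  have hright : ∀ i, M.Pm (G.parentsF (C i)) y (C i) y
      = ∑ ω : M.L → M.NVal, M.μ ω * g i ω := by
    intro i
    rw [M.Pm_parents_eq]
    refine Finset.sum_congr rfl fun ω _ => ?_
    by_cases h : ∀ v ∈ C i, M.f v y ω = y v <;> simp [hg, h]
  have hleft : M.Pm (G.parentsF (T.biUnion C)) y (T.biUnion C) y
      = ∑ ω : M.L → M.NVal, M.μ ω * ∏ i ∈ T, g i ω := by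
    rw [M.Pm_parents_eq]
    refine Finset.sum_congr rfl fun ω _ => ?_
    simp only [hg]
    rw [Finset.prod_boole]
    have hiff : (∀ v ∈ T.biUnion C, M.f v y ω = y v)
        ↔ ∀ i ∈ T, ∀ v ∈ C i, M.f v y ω = y v := by
      constructor
      · intro h i hi v hv; exact h v (Finset.mem_biUnion.mpr ⟨i, hi, hv⟩)
      · intro h v hv
        obtain ⟨i, hi, hvi⟩ := Finset.mem_biUnion.mp hv
        exact h i hi v hvi
    by_cases h : ∀ v ∈ T.biUnion C, M.f v y ω = y v
    · rw [if_pos h, if_pos (hiff.mp h), mul_one]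
    · rw [if_neg h, if_neg fun hh => h (hiff.mpr hh), mul_zero]
  have main : ∀ Tset : Finset (Fin n),
      ∑ ω : M.L → M.NVal, M.μ ω * ∏ i ∈ Tset, g i ω
        = ∏ i ∈ Tset, ∑ ω : M.L → M.NVal, M.μ ω * g i ω := by
    intro Tset
    induction Tset using Finset.induction_on with
    | empty => simp [M.sum_mu]
    | @insert j s hj ih =>
      simp only [Finset.prod_insert hj]
      rw [← ih]
      refine M.indep_mul (fun l => ∃ v ∈ C j, M.reads v l) (g j)
        (fun ω => ∏ i ∈ s, g i ω) ?_ ?_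
      · intro ω ω' hl
        refine gcong j ω ω' fun v hv => ?_
        exact M.f_latents v y ω ω' fun l hlv => hl l ⟨v, hv, hlv⟩
      · intro ω ω' hl
        refine Finset.prod_congr rfl fun i hi => ?_
        have hij : i ≠ j := fun h => hj (h ▸ hi)
        refine gcong i ω ω' fun v hv => ?_
        exact M.f_latents v y ω ω' fun l hlv => hl l (hread i j hij v hv l hlv)
  rw [hleft, main]
  exact Finset.prod_congr rfl fun i _ => (hright i).symm
end

section
/- Let G be an ADMG whose c-components are partitioned into h-nodes H_1, …, H_n forming an H-graph (a DAG) with a topological order. Suppose for each h-node H_k there is a set 𝒜_k ⊆ An_G(H_k)\H_k satisfying the modularity condition, with 𝒜_k contained in the union of h-nodes preceding H_k in the topological order. If a model Q (induced by an SCM on G) satisfies, for every k, Q(H_k ∪ 𝒜_k | do(Pa(H_k ∪ 𝒜_k))) = P(H_k ∪ 𝒜_k | Pa(H_k ∪ 𝒜_k)) for the true strictly positive SCM P, then Q(𝒱) = P(𝒱). -/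
open Classical

/-- H-graph edge: `Hs → Ht` iff intervening and conditioning on the parents of
`Ht` contained in `Hs` differ for `Ht` (do-calculus rule 2 fails). -/
def hEdge {V Val : Type} [Fintype V] [DecidableEq V] [Fintype Val] {G : ADMG V}
    (M : SCM V Val G) (Hs Ht : Finset V) : Prop :=
  Hs ≠ Ht ∧ ∃ y : V → Val,
    M.Pm (G.parentsF Ht ∩ Hs) y Ht y ≠ M.cond ∅ y Ht (G.parentsF Ht ∩ Hs) y


noncomputable section ModularAuxSec

open Classical

namespace ModularAux

set_option linter.unusedSectionVars false

variable {V Val : Type} [Fintype V] [DecidableEq V] [Fintype Val] {G : ADMG V}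

/-- A "c-factor"-style quantity: the probability that every variable in `B`
is a fixed point of its mechanism under the ambient assignment `y`. -/
def qf (N : SCM V Val G) (B : Finset V) (y : V → Val) : ℝ :=
  ∑ ω : N.L → N.NVal, if ∀ v ∈ B, N.f v y ω = y v then N.μ ω else 0

lemma mu_nonneg (N : SCM V Val G) (ω : N.L → N.NVal) : 0 ≤ N.μ ω :=
  Finset.prod_nonneg fun l _ => N.ν_nonneg l (ω l)

lemma sum_prod_one {ι Ω : Type*} [Fintype ι] [DecidableEq ι] [Fintype Ω]
    (g : ι → Ω → ℝ) (hg : ∀ i, ∑ x, g i x = 1) :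
    ∑ F : ι → Ω, ∏ i, g i (F i) = 1 := by
  rw [← Fintype.prod_sum g]
  simp [hg]

lemma mu_total (N : SCM V Val G) : ∑ ω : N.L → N.NVal, N.μ ω = 1 := by
  simp only [SCM.μ]
  exact sum_prod_one (fun l x => N.ν l x) N.ν_sum

lemma qf_empty (N : SCM V Val G) (y : V → Val) : qf N ∅ y = 1 := by
  simp only [qf, Finset.notMem_empty, false_implies, implies_true, if_true]
  exact mu_total N

lemma qf_mono (N : SCM V Val G) {B B' : Finset V} (h : B ⊆ B') (y : V → Val) :
    qf N B' y ≤ qf N B y := by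
  refine Finset.sum_le_sum fun ω _ => ?_
  by_cases h' : ∀ v ∈ B', N.f v y ω = y v
  · rw [if_pos h', if_pos fun v hv => h' v (h hv)]
  · rw [if_neg h']
    split_ifs
    · exact mu_nonneg N ω
    · exact le_refl 0

lemma wf_anc (G : ADMG V) : WellFounded (Relation.TransGen G.dir) :=
  have : IsTrans V (Relation.TransGen G.dir) := ⟨fun _ _ _ => Relation.TransGen.trans⟩
  have : IsIrrefl V (Relation.TransGen G.dir) := ⟨G.acyclic⟩
  Finite.wellFounded_of_trans_of_irrefl _

lemma wf_desc (G : ADMG V) : WellFounded (fun a b => Relation.TransGen G.dir b a) :=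
  have : IsTrans V (fun a b => Relation.TransGen G.dir b a) :=
    ⟨fun _ _ _ h1 h2 => Relation.TransGen.trans h2 h1⟩
  have : IsIrrefl V (fun a b => Relation.TransGen G.dir b a) := ⟨G.acyclic⟩
  Finite.wellFounded_of_trans_of_irrefl _

lemma not_dir_self (G : ADMG V) (v : V) : ¬ G.dir v v :=
  fun h => G.acyclic v (Relation.TransGen.single h)

lemma mem_parentsF {S : Finset V} {p : V} :
    p ∈ G.parentsF S ↔ p ∉ S ∧ ∃ w ∈ S, G.dir p w := by
  simp [ADMG.parentsF]

lemma solve_empty_iff (N : SCM V Val G) (x y : V → Val) (ω : N.L → N.NVal) :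
    N.solve ∅ x ω = y ↔ ∀ v, N.f v y ω = y v := by
  constructor
  · intro h v
    have h1 : N.solve ∅ x ω v = N.f v (N.solve ∅ x ω) ω := by
      rw [N.solve_spec]
      simp
    have h2 : N.f v (N.solve ∅ x ω) ω = N.f v y ω :=
      N.f_parents v _ y ω fun p _ => congrFun h p
    rw [← h2, ← h1]
    exact congrFun h v
  · intro h
    funext v
    refine (wf_anc G).induction (C := fun v => N.solve ∅ x ω v = y v) v ?_
    intro v ih
    rw [N.solve_spec]
    simp only [Finset.notMem_empty, if_false]
    rw [N.f_parents v _ y ω fun p hp => ih p (Relation.TransGen.single hp)]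
    exact h v

lemma solve_pa_iff (N : SCM V Val G) (S : Finset V) (y : V → Val) (ω : N.L → N.NVal) :
    (∀ v ∈ S, N.solve (G.parentsF S) y ω v = y v) ↔ ∀ v ∈ S, N.f v y ω = y v := by
  have hIS : ∀ v ∈ S, v ∉ G.parentsF S := fun v hv hmem => (mem_parentsF.mp hmem).1 hv
  have hI : ∀ p ∈ G.parentsF S, N.solve (G.parentsF S) y ω p = y p := fun p hp => by
    rw [N.solve_spec, if_pos hp]
  constructor
  · intro h v hv
    have h1 : N.solve (G.parentsF S) y ω v = N.f v (N.solve (G.parentsF S) y ω) ω := by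
      rw [N.solve_spec, if_neg (hIS v hv)]
    have h2 : N.f v (N.solve (G.parentsF S) y ω) ω = N.f v y ω := by
      refine N.f_parents v _ y ω fun p hp => ?_
      by_cases hpS : p ∈ S
      · exact h p hpS
      · exact hI p (mem_parentsF.mpr ⟨hpS, v, hv, hp⟩)
    rw [← h2, ← h1]
    exact h v hv
  · intro h v hv
    revert hv
    refine (wf_anc G).induction
      (C := fun v => v ∈ S → N.solve (G.parentsF S) y ω v = y v) v ?_
    intro v ih hv
    rw [N.solve_spec, if_neg (hIS v hv)]
    have h2 : N.f v (N.solve (G.parentsF S) y ω) ω = N.f v y ω := by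
      refine N.f_parents v _ y ω fun p hp => ?_
      by_cases hpS : p ∈ S
      · exact ih p (Relation.TransGen.single hp) hpS
      · exact hI p (mem_parentsF.mpr ⟨hpS, v, hv, hp⟩)
    rw [h2]
    exact h v hv

lemma P_empty_eq (N : SCM V Val G) (x y : V → Val) :
    N.P ∅ x y = qf N Finset.univ y := by
  unfold SCM.P qf
  refine Finset.sum_congr rfl fun ω _ => ?_
  refine if_congr ?_ rfl rfl
  rw [solve_empty_iff]
  simp

lemma Pm_pa_eq (N : SCM V Val G) (S : Finset V) (y : V → Val) :
    N.Pm (G.parentsF S) y S y = qf N S y := by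
  unfold SCM.Pm SCM.P qf
  have step1 : ∀ z : V → Val,
      (if ∀ v ∈ S, z v = y v then
        (∑ ω : N.L → N.NVal, if N.solve (G.parentsF S) y ω = z then N.μ ω else 0) else 0)
      = ∑ ω : N.L → N.NVal,
          if (∀ v ∈ S, z v = y v) ∧ N.solve (G.parentsF S) y ω = z then N.μ ω else 0 := by
    intro z
    split_ifs with h
    · exact Finset.sum_congr rfl fun ω _ => (if_congr (and_iff_right h).symm rfl rfl)
    · refine (Finset.sum_eq_zero fun ω _ => if_neg ?_).symm
      rintro ⟨h1, -⟩
      exact h h1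
  rw [Finset.sum_congr rfl fun z _ => step1 z, Finset.sum_comm]
  refine Finset.sum_congr rfl fun ω _ => ?_
  rw [Finset.sum_eq_single (N.solve (G.parentsF S) y ω)]
  · refine if_congr ?_ rfl rfl
    simpa using solve_pa_iff N S y ω
  · intro b _ hb
    refine if_neg ?_
    rintro ⟨-, h⟩
    exact hb h.symm
  · intro h
    exact absurd (Finset.mem_univ _) h

lemma qf_pos (N : SCM V Val G) (hpos : N.positive) (B : Finset V) (y : V → Val) :
    0 < qf N B y :=
  lt_of_lt_of_le (by rw [← P_empty_eq N y y]; exact hpos y y)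
    (qf_mono N (Finset.subset_univ B) y)

lemma qf_peel (N : SCM V Val G) (u : V) (B : Finset V) (y : V → Val)
    (hu : u ∉ B) (hch : ∀ v ∈ B, ¬ G.dir u v) :
    ∑ c : Val, qf N (insert u B) (Function.update y u c) = qf N B y := by
  unfold qf
  rw [Finset.sum_comm]
  refine Finset.sum_congr rfl fun ω _ => ?_
  have hcond : ∀ c : Val,
      (∀ v ∈ insert u B, N.f v (Function.update y u c) ω = Function.update y u c v)
        ↔ (N.f u y ω = c ∧ ∀ v ∈ B, N.f v y ω = y v) := by
    intro c
    have hupd : ∀ v, (v = u ∨ v ∈ B) → N.f v (Function.update y u c) ω = N.f v y ω := by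
      intro v hv
      refine N.f_parents v _ y ω fun p hp => ?_
      have hpu : p ≠ u := by
        rintro rfl
        rcases hv with rfl | hvB
        · exact not_dir_self G v hp
        · exact hch v hvB hp
      exact Function.update_of_ne hpu c y
    have e3 : ∀ v ∈ B,
        (N.f v (Function.update y u c) ω = Function.update y u c v) ↔ (N.f v y ω = y v) := by
      intro v hv
      rw [hupd v (Or.inr hv), Function.update_of_ne (fun h => hu (by rw [← h]; exact hv)) c y]
    rw [Finset.forall_mem_insert, hupd u (Or.inl rfl), Function.update_self]
    exact and_congr Iff.rfl
      ⟨fun h v hv => (e3 v hv).mp (h v hv), fun h v hv => (e3 v hv).mpr (h v hv)⟩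
  rw [Finset.sum_congr rfl fun c _ => if_congr (hcond c) rfl rfl]
  by_cases hR : ∀ v ∈ B, N.f v y ω = y v
  · rw [if_pos hR,
      Finset.sum_congr rfl fun c (_ : c ∈ Finset.univ) =>
        if_congr (and_iff_left (hR)) rfl rfl,
      Finset.sum_ite_eq Finset.univ (N.f u y ω) fun _ => N.μ ω,
      if_pos (Finset.mem_univ _)]
  · rw [if_neg hR]
    exact Finset.sum_eq_zero fun c _ => if_neg fun h => hR h.2

set_option maxHeartbeats 1000000 in
lemma qf_union_mul (N : SCM V Val G) (B C : Finset V) (y : V → Val)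
    (hsh : ∀ (l : N.L) (v w : V), v ∈ B → w ∈ C → N.reads v l → N.reads w l → False) :
    qf N (B ∪ C) y = qf N B y * qf N C y := by
  classical
  have hNV : ∀ _l : N.L, Nonempty N.NVal := by
    intro l
    rcases isEmpty_or_nonempty N.NVal with he | hne
    · exfalso
      have h1 := N.ν_sum l
      rw [Finset.univ_eq_empty, Finset.sum_empty] at h1
      exact zero_ne_one h1
    · exact hne
  set p : N.L → Prop := fun l => ∃ v ∈ B, N.reads v l with hp
  set e := Equiv.piEquivPiSubtypeProd p (fun _ => N.NVal) with he
  set μ1 : ({l // p l} → N.NVal) → ℝ := fun a => ∏ l : {l // p l}, N.ν l.1 (a l) with hμ1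
  set μ2 : ({l // ¬ p l} → N.NVal) → ℝ := fun b => ∏ l : {l // ¬ p l}, N.ν l.1 (b l) with hμ2
  have hμ : ∀ (a : {l // p l} → N.NVal) (b : {l // ¬ p l} → N.NVal),
      N.μ (e.symm (a, b)) = μ1 a * μ2 b := by
    intro a b
    simp only [SCM.μ, hμ1, hμ2]
    rw [← Fintype.prod_subtype_mul_prod_subtype p (fun l => N.ν l (e.symm (a, b) l))]
    congr 1
    · refine Finset.prod_congr rfl fun l _ => ?_
      have : e.symm (a, b) l.1 = a l := by
        simp [he, Equiv.piEquivPiSubtypeProd_symm_apply, dif_pos l.2]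
      rw [this]
    · refine Finset.prod_congr rfl fun l _ => ?_
      have : e.symm (a, b) l.1 = b l := by
        simp [he, Equiv.piEquivPiSubtypeProd_symm_apply, dif_neg l.2]
      rw [this]
  have hBdep : ∀ (a : {l // p l} → N.NVal) (b b' : {l // ¬ p l} → N.NVal),
      (∀ v ∈ B, N.f v y (e.symm (a, b)) = y v) ↔ (∀ v ∈ B, N.f v y (e.symm (a, b')) = y v) := by
    intro a b b'
    have heq : ∀ v ∈ B, N.f v y (e.symm (a, b)) = N.f v y (e.symm (a, b')) := by
      intro v hv
      refine N.f_latents v y _ _ fun l hl => ?_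
      have hpl : p l := ⟨v, hv, hl⟩
      simp [he, Equiv.piEquivPiSubtypeProd_symm_apply, dif_pos hpl]
    exact ⟨fun h v hv => (heq v hv).symm.trans (h v hv),
           fun h v hv => (heq v hv).trans (h v hv)⟩
  have hCdep : ∀ (a a' : {l // p l} → N.NVal) (b : {l // ¬ p l} → N.NVal),
      (∀ w ∈ C, N.f w y (e.symm (a, b)) = y w) ↔ (∀ w ∈ C, N.f w y (e.symm (a', b)) = y w) := by
    intro a a' b
    have heq : ∀ w ∈ C, N.f w y (e.symm (a, b)) = N.f w y (e.symm (a', b)) := by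
      intro w hw
      refine N.f_latents w y _ _ fun l hl => ?_
      have hpl : ¬ p l := by
        rintro ⟨v, hv, hrl⟩
        exact hsh l v w hv hw hrl hl
      simp [he, Equiv.piEquivPiSubtypeProd_symm_apply, dif_neg hpl]
    exact ⟨fun h w hw => (heq w hw).symm.trans (h w hw),
           fun h w hw => (heq w hw).trans (h w hw)⟩
  let b0 : {l // ¬ p l} → N.NVal := fun l => (hNV l.1).some
  let a0 : {l // p l} → N.NVal := fun l => (hNV l.1).some
  set FB : ({l // p l} → N.NVal) → ℝ :=
    fun a => if ∀ v ∈ B, N.f v y (e.symm (a, b0)) = y v then μ1 a else 0 with hFB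
  set FC : ({l // ¬ p l} → N.NVal) → ℝ :=
    fun b => if ∀ w ∈ C, N.f w y (e.symm (a0, b)) = y w then μ2 b else 0 with hFC
  have hsum1 : (∑ a : {l // p l} → N.NVal, μ1 a) = 1 :=
    sum_prod_one (fun (l : {l // p l}) x => N.ν l.1 x) (fun l => N.ν_sum l.1)
  have hsum2 : (∑ b : {l // ¬ p l} → N.NVal, μ2 b) = 1 :=
    sum_prod_one (fun (l : {l // ¬ p l}) x => N.ν l.1 x) (fun l => N.ν_sum l.1)
  have hsum_equiv : ∀ (D : Finset V),
      qf N D y = ∑ a : {l // p l} → N.NVal, ∑ b : {l // ¬ p l} → N.NVal,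
        (if ∀ v ∈ D, N.f v y (e.symm (a, b)) = y v then N.μ (e.symm (a, b)) else 0) := by
    intro D
    rw [qf, ← Equiv.sum_comp e.symm
      (fun ω => if ∀ v ∈ D, N.f v y ω = y v then N.μ ω else 0), Fintype.sum_prod_type]
  have hqB : qf N B y = ∑ a : {l // p l} → N.NVal, FB a := by
    rw [hsum_equiv B]
    have : ∀ (a : {l // p l} → N.NVal) (b : {l // ¬ p l} → N.NVal),
        (if ∀ v ∈ B, N.f v y (e.symm (a, b)) = y v then N.μ (e.symm (a, b)) else 0)
          = FB a * μ2 b := by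
      intro a b
      rw [if_congr (hBdep a b b0) rfl rfl, hμ a b]
      simp only [hFB]
      by_cases hc : ∀ v ∈ B, N.f v y (e.symm (a, b0)) = y v
      · rw [if_pos hc, if_pos hc]
      · rw [if_neg hc, if_neg hc, zero_mul]
    rw [Finset.sum_congr rfl fun a _ => Finset.sum_congr rfl fun b _ => this a b]
    rw [Finset.sum_congr rfl fun a (_ : a ∈ Finset.univ) => (Finset.mul_sum _ _ _).symm]
    rw [Finset.sum_congr rfl fun a (_ : a ∈ Finset.univ) => by rw [hsum2, mul_one]]
  have hqC : qf N C y = ∑ b : {l // ¬ p l} → N.NVal, FC b := by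
    rw [hsum_equiv C]
    have : ∀ (a : {l // p l} → N.NVal) (b : {l // ¬ p l} → N.NVal),
        (if ∀ v ∈ C, N.f v y (e.symm (a, b)) = y v then N.μ (e.symm (a, b)) else 0)
          = μ1 a * FC b := by
      intro a b
      rw [if_congr (hCdep a a0 b) rfl rfl, hμ a b]
      simp only [hFC]
      by_cases hc : ∀ v ∈ C, N.f v y (e.symm (a0, b)) = y v
      · rw [if_pos hc, if_pos hc]
      · rw [if_neg hc, if_neg hc, mul_zero]
    rw [Finset.sum_congr rfl fun a _ => Finset.sum_congr rfl fun b _ => this a b]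
    rw [← Fintype.sum_mul_sum μ1 FC, hsum1, one_mul]
  have hqBC : qf N (B ∪ C) y = (∑ a : {l // p l} → N.NVal, FB a) *
      (∑ b : {l // ¬ p l} → N.NVal, FC b) := by
    rw [hsum_equiv (B ∪ C), Fintype.sum_mul_sum]
    refine Finset.sum_congr rfl fun a _ => Finset.sum_congr rfl fun b _ => ?_
    have hiff : (∀ v ∈ B ∪ C, N.f v y (e.symm (a, b)) = y v)
        ↔ ((∀ v ∈ B, N.f v y (e.symm (a, b0)) = y v) ∧
           (∀ w ∈ C, N.f w y (e.symm (a0, b)) = y w)) :=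
      Finset.forall_mem_union.trans (and_congr (hBdep a b b0) (hCdep a a0 b))
    rw [if_congr hiff rfl rfl, hμ a b]
    simp only [hFB, hFC]
    by_cases h1 : ∀ v ∈ B, N.f v y (e.symm (a, b0)) = y v
    · by_cases h2 : ∀ w ∈ C, N.f w y (e.symm (a0, b)) = y w
      · rw [if_pos ⟨h1, h2⟩, if_pos h1, if_pos h2]
      · rw [if_neg (fun h => h2 h.2), if_pos h1, if_neg h2, mul_zero]
    · rw [if_neg (fun h => h1 h.1), if_neg h1, zero_mul]
  rw [hqBC, hqB, hqC]

lemma biConn_symm (G : ADMG V) {a b : V} (h : G.biConn a b) : G.biConn b a := by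
  induction h with
  | refl => exact Relation.ReflTransGen.refl
  | tail _ h2 ih => exact Relation.ReflTransGen.head (G.bidir_symm _ _ h2) ih

lemma blocks_no_shared {n : ℕ} (H : Fin n → Finset V)
    (hpdisj : ∀ j k, j ≠ k → Disjoint (H j) (H k))
    (hccu : ∀ k, ∀ Cc : Set V, G.isCComponent Cc → (Cc ∩ ↑(H k)).Nonempty → Cc ⊆ ↑(H k))
    (N : SCM V Val G) {j j' : Fin n} (hjj' : j ≠ j') {v w : V}
    (hv : v ∈ H j) (hw : w ∈ H j') {l : N.L}
    (hrv : N.reads v l) (hrw : N.reads w l) : False := by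
  have hvw : v ≠ w := by
    rintro rfl
    exact Finset.disjoint_left.mp (hpdisj j j' hjj') hv hw
  have hbid := N.semiMarkov v w l hvw hrv hrw
  set Cc : Set V := {b | G.biConn v b} with hCc
  have hcc : G.isCComponent Cc :=
    ⟨⟨v, Relation.ReflTransGen.refl⟩,
      fun a ha b hb => Relation.ReflTransGen.trans (biConn_symm G ha) hb,
      fun a ha b hab => Relation.ReflTransGen.trans ha hab⟩
  have hsub := hccu j Cc hcc ⟨v, Relation.ReflTransGen.refl, hv⟩
  have hwj : w ∈ H j := hsub (Relation.ReflTransGen.single hbid)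
  exact Finset.disjoint_left.mp (hpdisj j j' hjj') hwj hw

lemma qf_splitAll {n : ℕ} (H : Fin n → Finset V)
    (hpdisj : ∀ j k, j ≠ k → Disjoint (H j) (H k))
    (hccu : ∀ k, ∀ Cc : Set V, G.isCComponent Cc → (Cc ∩ ↑(H k)).Nonempty → Cc ⊆ ↑(H k))
    (N : SCM V Val G) :
    ∀ (s : Finset (Fin n)) (D : Finset V), (∀ v ∈ D, ∃ j ∈ s, v ∈ H j) →
      ∀ y, qf N D y = ∏ j ∈ s, qf N (D ∩ H j) y := by
  intro s
  induction s using Finset.induction_on with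
  | empty =>
    intro D hD y
    have hDe : D = ∅ := Finset.eq_empty_of_forall_notMem fun v hv => by
      rcases hD v hv with ⟨j, hj, _⟩
      exact absurd hj (Finset.notMem_empty j)
    rw [hDe, Finset.prod_empty, qf_empty]
  | @insert j s hjs ih =>
    intro D hD y
    have hblock : ∀ w ∈ D \ H j, ∃ j' ∈ s, w ∈ H j' := by
      intro w hw
      rcases Finset.mem_sdiff.mp hw with ⟨hwD, hwj⟩
      rcases hD w hwD with ⟨j', hj', hwj'⟩
      rcases Finset.mem_insert.mp hj' with rfl | hj's
      · exact absurd hwj' hwj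
      · exact ⟨j', hj's, hwj'⟩
    have hsh : ∀ (l : N.L) (v w : V), v ∈ D ∩ H j → w ∈ D \ H j →
        N.reads v l → N.reads w l → False := by
      intro l v w hvm hwm hrv hrw
      rcases Finset.mem_inter.mp hvm with ⟨-, hvj⟩
      rcases hblock w hwm with ⟨j', hj's, hwj'⟩
      have hne : j ≠ j' := by
        rintro rfl
        exact hjs hj's
      exact blocks_no_shared H hpdisj hccu N hne hvj hwj' hrv hrw
    have hDsplit : D ∩ H j ∪ D \ H j = D := by rw [Finset.union_comm]; exact Finset.sdiff_union_inter D (H j)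
    have key : qf N D y = qf N (D ∩ H j) y * qf N (D \ H j) y := by
      conv_lhs => rw [← hDsplit]
      exact qf_union_mul N (D ∩ H j) (D \ H j) y hsh
    have hpiece : ∀ j' ∈ s, (D \ H j) ∩ H j' = D ∩ H j' := by
      intro j' hj's
      have hne : j' ≠ j := by
        rintro rfl
        exact hjs hj's
      ext x
      simp only [Finset.mem_inter, Finset.mem_sdiff]
      constructor
      · rintro ⟨⟨hxD, -⟩, hxj'⟩
        exact ⟨hxD, hxj'⟩
      · rintro ⟨hxD, hxj'⟩
        refine ⟨⟨hxD, fun hxj => ?_⟩, hxj'⟩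
        exact Finset.disjoint_left.mp (hpdisj j' j hne) hxj' hxj
    rw [Finset.prod_insert hjs, key, ih (D \ H j) hblock y]
    congr 1
    exact Finset.prod_congr rfl fun j' hj's => by rw [hpiece j' hj's]

lemma stage_eq (M Q : SCM V Val G) (W : Finset V)
    (hmatched : ∀ y, qf Q W y = qf M W y) :
    ∀ (m : ℕ) (D : Finset V), D ⊆ W → (∀ u ∈ W, ∀ v ∈ D, G.dir u v → u ∈ D) →
      (W \ D).card = m → ∀ y, qf Q D y = qf M D y := by
  intro m
  induction m with
  | zero =>
    intro D hDW hcl hcard y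
    have hDW' : D = W := by
      refine Finset.Subset.antisymm hDW fun w hw => ?_
      by_contra hwD
      have hmem : w ∈ W \ D := Finset.mem_sdiff.mpr ⟨hw, hwD⟩
      rw [Finset.card_eq_zero] at hcard
      rw [hcard] at hmem
      exact Finset.notMem_empty w hmem
    rw [hDW']
    exact hmatched y
  | succ m ih =>
    intro D hDW hcl hcard y
    have hne : (W \ D).Nonempty := Finset.card_pos.mp (by omega)
    obtain ⟨u, hu, hmin⟩ := (wf_anc G).has_min (↑(W \ D) : Set V)
      ⟨hne.choose, Finset.mem_coe.mpr hne.choose_spec⟩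
    have huWD : u ∈ W \ D := Finset.mem_coe.mp hu
    have huW : u ∈ W := (Finset.mem_sdiff.mp huWD).1
    have huD : u ∉ D := (Finset.mem_sdiff.mp huWD).2
    have hclD' : ∀ w ∈ W, ∀ v ∈ insert u D, G.dir w v → w ∈ insert u D := by
      intro w hw v hv hdir
      rcases Finset.mem_insert.mp hv with rfl | hvD
      · by_cases hwD : w ∈ D
        · exact Finset.mem_insert_of_mem hwD
        · exact absurd (Relation.TransGen.single hdir)
            (hmin w (Finset.mem_coe.mpr (Finset.mem_sdiff.mpr ⟨hw, hwD⟩)))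
      · exact Finset.mem_insert_of_mem (hcl w hw v hvD hdir)
    have hsub' : insert u D ⊆ W := Finset.insert_subset huW hDW
    have hcard' : (W \ insert u D).card = m := by
      rw [Finset.sdiff_insert, Finset.card_erase_of_mem (Finset.mem_sdiff.mpr ⟨huW, huD⟩)]
      omega
    have hchQ : ∀ v ∈ D, ¬ G.dir u v := fun v hv hdir => huD (hcl u huW v hv hdir)
    rw [← qf_peel Q u D y huD hchQ, ← qf_peel M u D y huD hchQ]
    exact Finset.sum_congr rfl fun c _ => ih (insert u D) hsub' hclD' hcard' _

lemma pin_eq {n : ℕ} (H : Fin n → Finset V)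
    (hpdisj : ∀ j k, j ≠ k → Disjoint (H j) (H k))
    (hpcover : ∀ v : V, ∃ k, v ∈ H k)
    (hccu : ∀ k, ∀ Cc : Set V, G.isCComponent Cc → (Cc ∩ ↑(H k)).Nonempty → Cc ⊆ ↑(H k))
    (M Q : SCM V Val G) (hpos : M.positive) (W : Finset V)
    (hmatched : ∀ y, qf Q W y = qf M W y) :
    ∀ (m : ℕ) (D : Finset V), D ⊆ W → (∀ u ∈ W, ∀ v ∈ D, G.dir u v → u ∈ D) →
      D.card = m → ∀ (j : Fin n) (y : V → Val), qf Q (D ∩ H j) y = qf M (D ∩ H j) y := by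
  have hcoverall : ∀ (N : SCM V Val G) (D : Finset V) (y : V → Val),
      qf N D y = ∏ j : Fin n, qf N (D ∩ H j) y := by
    intro N D y
    exact qf_splitAll H hpdisj hccu N Finset.univ D
      (fun v _ => ⟨(hpcover v).choose, Finset.mem_univ _, (hpcover v).choose_spec⟩) y
  intro m
  induction m with
  | zero =>
    intro D _ _ hcard j y
    rw [Finset.card_eq_zero] at hcard
    rw [hcard, Finset.empty_inter, qf_empty, qf_empty]
  | succ m ih =>
    intro D hDW hcl hcard j y
    have hne : D.Nonempty := Finset.card_pos.mp (by omega)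
    obtain ⟨u, hu, hmax⟩ := (wf_desc G).has_min (↑D : Set V)
      ⟨hne.choose, Finset.mem_coe.mpr hne.choose_spec⟩
    have huD : u ∈ D := Finset.mem_coe.mp hu
    have hmax' : ∀ x ∈ D, ¬ Relation.TransGen G.dir u x := fun x hx h =>
      hmax x (Finset.mem_coe.mpr hx) h
    have hD0W : (D.erase u) ⊆ W := (Finset.erase_subset u D).trans hDW
    have hclD0 : ∀ w ∈ W, ∀ v ∈ D.erase u, G.dir w v → w ∈ D.erase u := by
      intro w hw v hv hdir
      have hvD : v ∈ D := Finset.mem_of_mem_erase hv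
      have hwD : w ∈ D := hcl w hw v hvD hdir
      refine Finset.mem_erase.mpr ⟨?_, hwD⟩
      rintro rfl
      exact hmax' v hvD (Relation.TransGen.single hdir)
    have hcard0 : (D.erase u).card = m := by
      rw [Finset.card_erase_of_mem huD]
      omega
    obtain ⟨j0, hj0⟩ := hpcover u
    have hDj_eq : ∀ j' : Fin n, j' ≠ j0 → D ∩ H j' = (D.erase u) ∩ H j' := by
      intro j' hj'
      ext x
      simp only [Finset.mem_inter, Finset.mem_erase]
      constructor
      · rintro ⟨hxD, hxH⟩
        refine ⟨⟨?_, hxD⟩, hxH⟩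
        rintro rfl
        exact Finset.disjoint_left.mp (hpdisj j' j0 hj') hxH hj0
      · rintro ⟨⟨_, hxD⟩, hxH⟩
        exact ⟨hxD, hxH⟩
    by_cases hjj0 : j = j0
    · subst hjj0
      have hstage : qf Q D y = qf M D y :=
        stage_eq M Q W hmatched (W \ D).card D hDW hcl rfl y
      have hsplitQ := hcoverall Q D y
      have hsplitM := hcoverall M D y
      rw [← Finset.mul_prod_erase Finset.univ _ (Finset.mem_univ j)] at hsplitQ hsplitM
      have hprodeq : (∏ j' ∈ Finset.univ.erase j, qf Q (D ∩ H j') y)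
          = ∏ j' ∈ Finset.univ.erase j, qf M (D ∩ H j') y := by
        refine Finset.prod_congr rfl fun j' hj' => ?_
        have hj'ne : j' ≠ j := (Finset.mem_erase.mp hj').1
        rw [hDj_eq j' hj'ne]
        exact ih (D.erase u) hD0W hclD0 hcard0 j' y
      have hposp : (0:ℝ) < ∏ j' ∈ Finset.univ.erase j, qf M (D ∩ H j') y :=
        Finset.prod_pos fun j' _ => qf_pos M hpos _ y
      have hkey : qf Q (D ∩ H j) y * (∏ j' ∈ Finset.univ.erase j, qf M (D ∩ H j') y)
          = qf M (D ∩ H j) y * (∏ j' ∈ Finset.univ.erase j, qf M (D ∩ H j') y) := by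
        rw [← hprodeq, ← hsplitQ, hstage, hsplitM, hprodeq]
      exact mul_right_cancel₀ (ne_of_gt hposp) hkey
    · rw [hDj_eq j hjj0]
      exact ih (D.erase u) hD0W hclD0 hcard0 j y

end ModularAux
end ModularAuxSec

/-- modular training matches the joint: if the h-nodes `H k`
partition the c-components into an H-graph whose topological order is the index
order, each `𝒜 k ⊆ An(H k) \ H k` satisfies the modularity condition and lies
in earlier h-nodes, and the model `Q` matches the observational conditional
`P(H k ∪ 𝒜 k | Pa(H k ∪ 𝒜 k))` of the true strictly positive SCM `M` as its
interventional distribution `Q(H k ∪ 𝒜 k | do(Pa(H k ∪ 𝒜 k)))` for every `k`,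
then `Q(𝒱) = P(𝒱)`. -/
theorem modular_training_matches_joint
    {V Val : Type} [Fintype V] [DecidableEq V] [Fintype Val]
    (G : ADMG V) {n : ℕ} (H : Fin n → Finset V)
    (hpdisj : ∀ j k, j ≠ k → Disjoint (H j) (H k))
    (hpcover : ∀ v : V, ∃ k, v ∈ H k)
    (hccu : ∀ k, ∀ Cc : Set V, G.isCComponent Cc → (Cc ∩ ↑(H k)).Nonempty → Cc ⊆ ↑(H k))
    (A : Fin n → Finset V)
    (hAanc : ∀ k, ↑(A k) ⊆ G.ancestors ↑(H k) \ ↑(H k))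
    (hAprev : ∀ k, A k ⊆ (Finset.univ.filter fun j => j < k).biUnion H)
    (M Q : SCM V Val G) (hpos : M.positive)
    (htopo : ∀ j k : Fin n, hEdge M (H j) (H k) → j < k)
    (hmod : ∀ k, ∀ y : V → Val,
      M.Pm (G.parentsF (H k ∪ A k)) y (H k ∪ A k) y =
        M.cond ∅ y (H k ∪ A k) (G.parentsF (H k ∪ A k)) y)
    (hmatch : ∀ k, ∀ y : V → Val,
      Q.Pm (G.parentsF (H k ∪ A k)) y (H k ∪ A k) y =
        M.cond ∅ y (H k ∪ A k) (G.parentsF (H k ∪ A k)) y) :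
    ∀ y : V → Val, Q.P ∅ y y = M.P ∅ y y := by
  classical
  have key : ∀ (k : Fin n) (y' : V → Val),
      ModularAux.qf Q (H k) y' = ModularAux.qf M (H k) y' := by
    intro k
    have hmatched : ∀ y' : V → Val,
        ModularAux.qf Q (H k ∪ A k) y' = ModularAux.qf M (H k ∪ A k) y' := by
      intro y'
      rw [← ModularAux.Pm_pa_eq Q (H k ∪ A k) y', ← ModularAux.Pm_pa_eq M (H k ∪ A k) y',
        hmatch k y', hmod k y']
    intro y'
    have hpin := ModularAux.pin_eq H hpdisj hpcover hccu M Q hpos (H k ∪ A k) hmatched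
      (H k ∪ A k).card (H k ∪ A k) (Finset.Subset.refl _)
      (fun u hu v _ _ => hu) rfl k y'
    have hint : (H k ∪ A k) ∩ H k = H k :=
      Finset.inter_eq_right.mpr Finset.subset_union_left
    rwa [hint] at hpin
  intro y
  have hcov : ∀ v ∈ (Finset.univ : Finset V), ∃ j ∈ (Finset.univ : Finset (Fin n)), v ∈ H j :=
    fun v _ => ⟨(hpcover v).choose, Finset.mem_univ _, (hpcover v).choose_spec⟩
  rw [ModularAux.P_empty_eq Q y y, ModularAux.P_empty_eq M y y,
    ModularAux.qf_splitAll H hpdisj hccu Q Finset.univ Finset.univ hcov y,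
    ModularAux.qf_splitAll H hpdisj hccu M Finset.univ Finset.univ hcov y]
  refine Finset.prod_congr rfl fun j _ => ?_
  simp only [Finset.univ_inter]
  exact key j y
end

section
/- Let G be an ADMG with c-components {C_i}, and fix an intervention I contained in c-component C_j. Then for any strictly positive SCM inducing G, the interventional joint distribution factorizes as P_I(𝒱\I) = P_{Pa(C_j)∪I}(C_j \ I) · ∏_{i≠j} P_{Pa(C_i)}(C_i); in particular, the c-factors of all c-components not containing I coincide with the corresponding c-factors of the observational distribution P(𝒱). -/
open Classical

section Aux

variable {V Val : Type} [Fintype V] [DecidableEq V] [Fintype Val] {G : ADMG V}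

private lemma wf_transGen (G : ADMG V) :
    WellFounded (Relation.TransGen G.dir) := by
  letI : IsTrans V (Relation.TransGen G.dir) := ⟨fun _ _ _ => Relation.TransGen.trans⟩
  letI : IsIrrefl V (Relation.TransGen G.dir) := ⟨fun v h => G.acyclic v h⟩
  exact Finite.wellFounded_of_trans_of_irrefl _

/-- Lemma A: on a "closed" set `S` (all parents inside `S ∪ J`), the event that
the solution equals `y` on `S` is equivalent to the local structural equations
holding on `S`. -/
private lemma solve_iff_f (M : SCM V Val G) (J S : Finset V) (y : V → Val)
    (ω : M.L → M.NVal)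
    (hSJ : ∀ v ∈ S, v ∉ J)
    (hpar : ∀ v ∈ S, ∀ p, G.dir p v → p ∈ S ∨ p ∈ J) :
    (∀ v ∈ S, M.solve J y ω v = y v) ↔ (∀ v ∈ S, M.f v y ω = y v) := by
  constructor
  · intro h v hv
    have h1 : M.solve J y ω v = M.f v (M.solve J y ω) ω := by
      rw [M.solve_spec, if_neg (hSJ v hv)]
    have h2 : M.f v (M.solve J y ω) ω = M.f v y ω := by
      apply M.f_parents
      intro p hp
      rcases hpar v hv p hp with hpS | hpJ
      · exact h p hpS
      · rw [M.solve_spec, if_pos hpJ]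
    rw [← h2, ← h1, h v hv]
  · intro h v
    induction v using (wf_transGen G).induction with
    | _ v IH =>
      intro hv
      have h1 : M.solve J y ω v = M.f v (M.solve J y ω) ω := by
        rw [M.solve_spec, if_neg (hSJ v hv)]
      have h2 : M.f v (M.solve J y ω) ω = M.f v y ω := by
        apply M.f_parents
        intro p hp
        rcases hpar v hv p hp with hpS | hpJ
        · exact IH p (Relation.TransGen.single hp) hpS
        · rw [M.solve_spec, if_pos hpJ]
      rw [h1, h2, h v hv]

/-- Lemma B: the marginal interventional probability as a sum over latent
configurations of indicators of the local structural equations. -/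
private lemma Pm_eq_sum (M : SCM V Val G) (J S : Finset V) (y : V → Val)
    (hSJ : ∀ v ∈ S, v ∉ J)
    (hpar : ∀ v ∈ S, ∀ p, G.dir p v → p ∈ S ∨ p ∈ J) :
    M.Pm J y S y = ∑ ω : M.L → M.NVal,
      if ∀ v ∈ S, M.f v y ω = y v then M.μ ω else 0 := by
  unfold SCM.Pm SCM.P
  have step : ∀ z : V → Val,
      (if ∀ v ∈ S, z v = y v then ∑ ω : M.L → M.NVal,
          if M.solve J y ω = z then M.μ ω else 0 else 0)
        = ∑ ω : M.L → M.NVal,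
          if ∀ v ∈ S, z v = y v then (if M.solve J y ω = z then M.μ ω else 0) else 0 := by
    intro z
    by_cases h : ∀ v ∈ S, z v = y v
    · rw [if_pos h]
      exact Finset.sum_congr rfl fun ω _ => (if_pos h).symm
    · rw [if_neg h]
      rw [Finset.sum_congr rfl fun ω _ => if_neg h, Finset.sum_const_zero]
  rw [Finset.sum_congr rfl fun z _ => step z, Finset.sum_comm]
  refine Finset.sum_congr rfl fun ω _ => ?_
  rw [Fintype.sum_eq_single (M.solve J y ω)]
  · have hiff := solve_iff_f M J S y ω hSJ hpar
    by_cases h : ∀ v ∈ S, M.solve J y ω v = y v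
    · rw [if_pos h, if_pos rfl, if_pos (hiff.1 h)]
    · rw [if_neg h, if_neg (fun hc => h (hiff.2 hc))]
  · intro z hz
    split
    · rw [if_neg (fun hc => hz hc.symm)]
    · rfl

private lemma prod_ite_one {n : ℕ} (Q : Fin n → Prop) [∀ i, Decidable (Q i)]
    [Decidable (∀ i, Q i)] :
    (∏ i : Fin n, if Q i then (1 : ℝ) else 0) = if ∀ i, Q i then 1 else 0 := by
  by_cases h : ∀ i, Q i
  · rw [if_pos h]
    exact Finset.prod_eq_one fun i _ => if_pos (h i)
  · rw [if_neg h]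
    push_neg at h
    obtain ⟨i, hi⟩ := h
    exact Finset.prod_eq_zero (Finset.mem_univ i) (if_neg hi)

/-- Abstract independence: a sum of a product of functions depending on
pairwise disjoint groups of independent coordinates factorizes. -/
private lemma indep_abstract {n : ℕ} {L N : Type} [Fintype L] [DecidableEq L]
    [Fintype N] (d : N) (κ : L → Fin n) (ν : L → N → ℝ) (hν : ∀ l, ∑ x, ν l x = 1)
    (g : Fin n → (L → N) → ℝ)
    (hdep : ∀ i (ω ω' : L → N), (∀ l, κ l = i → ω l = ω' l) → g i ω = g i ω') :
    ∑ ω : L → N, (∏ i, g i ω) * ∏ l, ν l (ω l)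
      = ∏ i, ∑ ω : L → N, g i ω * ∏ l, ν l (ω l) := by
  let e : (L → N) ≃ (∀ i : Fin n, {l : L // κ l = i} → N) :=
    { toFun := fun ω i l => ω l.1
      invFun := fun σ l => σ (κ l) ⟨l, rfl⟩
      left_inv := fun ω => rfl
      right_inv := fun σ => by
        funext i l
        obtain ⟨l, hl⟩ := l
        subst hl
        rfl }
  have hsymm : ∀ (σ : ∀ i : Fin n, {l : L // κ l = i} → N) l,
      e.symm σ l = σ (κ l) ⟨l, rfl⟩ := fun σ l => rfl
  let ext : ∀ i : Fin n, ({l : L // κ l = i} → N) → (L → N) :=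
    fun i τ l => if h : κ l = i then τ ⟨l, h⟩ else d
  have hg : ∀ (σ : ∀ i : Fin n, {l : L // κ l = i} → N) i,
      g i (e.symm σ) = g i (ext i (σ i)) := by
    intro σ i
    apply hdep
    intro l hl
    rw [hsymm]
    subst hl
    simp [ext]
  have hμ : ∀ (σ : ∀ i : Fin n, {l : L // κ l = i} → N),
      (∏ l, ν l (e.symm σ l)) = ∏ i, ∏ l : {l : L // κ l = i}, ν l.1 (σ i l) := by
    intro σ
    rw [← Fintype.prod_fiberwise κ (fun l => ν l (e.symm σ l))]
    refine Finset.prod_congr rfl fun i _ => Finset.prod_congr rfl fun l _ => ?_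
    rw [hsymm]
    obtain ⟨l, hl⟩ := l
    subst hl
    rfl
  have hone : ∀ i : Fin n,
      (∑ τ : {l : L // κ l = i} → N, ∏ l : {l : L // κ l = i}, ν l.1 (τ l)) = 1 := by
    intro i
    rw [← Fintype.piFinset_univ, ← Finset.prod_univ_sum]
    exact Finset.prod_eq_one fun l _ => hν l.1
  have main : ∀ (H : ∀ i : Fin n, ({l : L // κ l = i} → N) → ℝ),
      (∑ σ : ∀ i : Fin n, {l : L // κ l = i} → N, ∏ i, H i (σ i))
        = ∏ i, ∑ τ : {l : L // κ l = i} → N, H i τ := by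
    intro H
    rw [← Fintype.piFinset_univ, ← Finset.prod_univ_sum]
  calc ∑ ω : L → N, (∏ i, g i ω) * ∏ l, ν l (ω l)
      = ∑ σ : ∀ i : Fin n, {l : L // κ l = i} → N,
          ∏ i, (g i (ext i (σ i)) * ∏ l : {l : L // κ l = i}, ν l.1 (σ i l)) := by
        rw [← Equiv.sum_comp e.symm]
        refine Finset.sum_congr rfl fun σ _ => ?_
        rw [hμ σ, Finset.prod_mul_distrib]
        congr 1
        exact Finset.prod_congr rfl fun i _ => hg σ i
    _ = ∏ i, ∑ τ : {l : L // κ l = i} → N,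
          g i (ext i τ) * ∏ l : {l : L // κ l = i}, ν l.1 (τ l) :=
        main (fun i τ => g i (ext i τ) * ∏ l : {l : L // κ l = i}, ν l.1 (τ l))
    _ = ∏ i, ∑ ω : L → N, g i ω * ∏ l, ν l (ω l) := by
        refine Finset.prod_congr rfl fun i _ => ?_
        rw [← Equiv.sum_comp e.symm (fun ω => g i ω * ∏ l, ν l (ω l))]
        have hpt : ∀ σ : ∀ i : Fin n, {l : L // κ l = i} → N,
            g i (e.symm σ) * (∏ l, ν l (e.symm σ l))
              = ∏ i', ((if h : i' = i then g i (ext i (h ▸ σ i')) else 1)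
                  * ∏ l : {l : L // κ l = i'}, ν l.1 (σ i' l)) := by
          intro σ
          rw [hg σ i, hμ σ, Finset.prod_mul_distrib]
          congr 1
          rw [Finset.prod_dite_eq' Finset.univ i
            (fun i' h => g i (ext i (h ▸ σ i')))]
          rw [if_pos (Finset.mem_univ i)]
        rw [Finset.sum_congr rfl fun σ _ => hpt σ,
          main (fun i' τ => (if h : i' = i then g i (ext i (h ▸ τ)) else 1)
            * ∏ l : {l : L // κ l = i'}, ν l.1 (τ l)),
          ← Finset.mul_prod_erase Finset.univ _ (Finset.mem_univ i)]
        have h2 : ∀ i' ∈ Finset.univ.erase i,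
            (∑ τ : {l : L // κ l = i'} → N,
              (if h : i' = i then g i (ext i (h ▸ τ)) else 1)
                * ∏ l : {l : L // κ l = i'}, ν l.1 (τ l)) = 1 := by
          intro i' hi'
          have hne : i' ≠ i := (Finset.mem_erase.1 hi').1
          calc (∑ τ : {l : L // κ l = i'} → N,
                (if h : i' = i then g i (ext i (h ▸ τ)) else 1)
                  * ∏ l : {l : L // κ l = i'}, ν l.1 (τ l))
              = ∑ τ : {l : L // κ l = i'} → N,
                  ∏ l : {l : L // κ l = i'}, ν l.1 (τ l) :=
                Finset.sum_congr rfl fun τ _ => by rw [dif_neg hne, one_mul]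
            _ = 1 := hone i'
        rw [Finset.prod_congr rfl h2, Finset.prod_const_one, mul_one]
        refine Finset.sum_congr rfl fun τ _ => ?_
        rw [dif_pos rfl]

/-- Lemma C: independence for the SCM's latent measure. -/
private lemma indep_prod (M : SCM V Val G) {n : ℕ} (κ : M.L → Fin n)
    (g : Fin n → (M.L → M.NVal) → ℝ)
    (hdep : ∀ i (ω ω' : M.L → M.NVal), (∀ l, κ l = i → ω l = ω' l) → g i ω = g i ω') :
    ∑ ω : M.L → M.NVal, (∏ i, g i ω) * M.μ ω
      = ∏ i, ∑ ω : M.L → M.NVal, g i ω * M.μ ω := by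
  have hN : Nonempty M.NVal ∨ IsEmpty M.L := by
    by_cases hL : Nonempty M.L
    · left
      by_contra hN
      obtain ⟨l⟩ := hL
      haveI : IsEmpty M.NVal := not_nonempty_iff.1 hN
      have h0 : (∑ x : M.NVal, M.ν l x) = 0 :=
        Finset.sum_eq_zero fun x _ => (IsEmpty.false x).elim
      exact zero_ne_one (h0.symm.trans (M.ν_sum l))
    · exact Or.inr (not_nonempty_iff.1 hL)
  rcases hN with hN | hL
  · obtain ⟨d⟩ := hN
    unfold SCM.μ
    exact indep_abstract d κ M.ν M.ν_sum g hdep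
  · haveI : Unique (M.L → M.NVal) :=
      ⟨⟨fun l => (IsEmpty.false l).elim⟩, fun ω => funext fun l => (IsEmpty.false l).elim⟩
    have hμ1 : ∀ ω : M.L → M.NVal, M.μ ω = 1 := by
      intro ω
      unfold SCM.μ
      rw [Finset.univ_eq_empty, Finset.prod_empty]
    rw [Fintype.sum_unique, hμ1, mul_one]
    refine Finset.prod_congr rfl fun i _ => ?_
    rw [Fintype.sum_unique, hμ1, mul_one]

end Aux

/-- Tian's factorization of an interventional distribution: for an
intervention `I` contained in the c-component `C j`,
`P_I(𝒱 \ I) = P_{Pa(C j) ∪ I}(C j \ I) · ∏_{i ≠ j} P_{Pa(C i)}(C i)`; in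
particular the c-factors of c-components not containing `I` coincide with the
observational c-factors. -/
theorem interventional_c_factorization
    {V Val : Type} [Fintype V] [DecidableEq V] [Fintype Val]
    (G : ADMG V) {n : ℕ} (C : Fin n → Finset V)
    (hcc : ∀ i, G.isCComponent ↑(C i))
    (hdisj : ∀ i j, i ≠ j → Disjoint (C i) (C j))
    (hcover : ∀ v : V, ∃ i, v ∈ C i)
    (I : Finset V) (j : Fin n) (hIj : I ⊆ C j)
    (M : SCM V Val G) (hpos : M.positive) (y : V → Val) :
    M.Pm I y (Finset.univ \ I) y =
      M.Pm (G.parentsF (C j) ∪ I) y (C j \ I) y *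
        ∏ i ∈ Finset.univ.erase j, M.Pm (G.parentsF (C i)) y (C i) y := by
  classical
  -- the index of the c-component containing a vertex
  set idx : V → Fin n := fun v => (hcover v).choose with hidx_def
  have hidx : ∀ v, v ∈ C (idx v) := fun v => (hcover v).choose_spec
  have huniq : ∀ v i, v ∈ C i → idx v = i := by
    intro v i h
    by_contra hne
    exact (Finset.disjoint_left.1 (hdisj _ _ hne) (hidx v)) h
  -- the sets and intervention targets of the factorization
  set S : Fin n → Finset V := fun i => if i = j then C j \ I else C i with hS_def
  set J : Fin n → Finset V :=
    fun i => if i = j then G.parentsF (C j) ∪ I else G.parentsF (C i) with hJ_def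
  have hS_pos : S j = C j \ I := by simp [hS_def]
  have hJ_pos : J j = G.parentsF (C j) ∪ I := by simp [hJ_def]
  have hS_neg : ∀ i, i ≠ j → S i = C i := by
    intro i h; simp [hS_def, h]
  have hJ_neg : ∀ i, i ≠ j → J i = G.parentsF (C i) := by
    intro i h; simp [hJ_def, h]
  have hSsub : ∀ i, S i ⊆ C i := by
    intro i
    by_cases h : i = j
    · rw [h, hS_pos]
      exact Finset.sdiff_subset
    · rw [hS_neg i h]
  -- the latent labelling by c-components
  set κ : M.L → Fin n :=
    fun l => if h : ∃ v, M.reads v l then idx h.choose else j with hκ_def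
  have hκ : ∀ l v i, M.reads v l → v ∈ C i → κ l = i := by
    intro l v i hr hv
    have hex : ∃ v, M.reads v l := ⟨v, hr⟩
    have hw : M.reads hex.choose l := hex.choose_spec
    simp only [hκ_def, dif_pos hex]
    by_cases hvw : hex.choose = v
    · rw [hvw]
      exact huniq v i hv
    · have hb : G.bidir v hex.choose :=
        M.semiMarkov v hex.choose l (fun h => hvw h.symm) hr hw
      have hmem : hex.choose ∈ C i := by
        have := (hcc i).2.2 v (Finset.mem_coe.2 hv) hex.choose
          (Relation.ReflTransGen.single hb)
        exact Finset.mem_coe.1 this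
      exact huniq _ i hmem
  -- the indicator functions of the local structural equations on each S i
  set g : Fin n → (M.L → M.NVal) → ℝ :=
    fun i ω => if ∀ v ∈ S i, M.f v y ω = y v then 1 else 0 with hg_def
  have hdep : ∀ i (ω ω' : M.L → M.NVal),
      (∀ l, κ l = i → ω l = ω' l) → g i ω = g i ω' := by
    intro i ω ω' hagr
    have : ∀ v ∈ S i, M.f v y ω = M.f v y ω' := fun v hv =>
      M.f_latents v y ω ω' (fun l hl => hagr l (hκ l v i hl (hSsub i hv)))
    simp only [hg_def]
    exact if_congr (forall₂_congr fun v hv => by rw [this v hv]) rfl rfl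
  -- hypotheses of Lemma B for each factor
  have hSJ : ∀ i, ∀ v ∈ S i, v ∉ J i := by
    intro i v hv
    have hvC : v ∈ C i := hSsub i hv
    by_cases h : i = j
    · rw [h, hS_pos] at hv
      rw [h, hJ_pos]
      intro hmem
      rcases Finset.mem_union.1 hmem with hp | hI
      · exact ((Finset.mem_filter.1 hp).2.1 (h ▸ hvC)).elim
      · exact (Finset.mem_sdiff.1 hv).2 hI
    · rw [hJ_neg i h]
      intro hp
      exact (Finset.mem_filter.1 hp).2.1 hvC
  have hpar : ∀ i, ∀ v ∈ S i, ∀ p, G.dir p v → p ∈ S i ∨ p ∈ J i := by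
    intro i v hv p hp
    have hvC : v ∈ C i := hSsub i hv
    by_cases h : i = j
    · rw [h, hS_pos, hJ_pos]
      by_cases hpC : p ∈ C j
      · by_cases hpI : p ∈ I
        · exact Or.inr (Finset.mem_union_right _ hpI)
        · exact Or.inl (Finset.mem_sdiff.2 ⟨hpC, hpI⟩)
      · refine Or.inr (Finset.mem_union_left _ ?_)
        exact Finset.mem_filter.2 ⟨Finset.mem_univ p, hpC, v, h ▸ hvC, hp⟩
    · rw [hS_neg i h, hJ_neg i h]
      by_cases hpC : p ∈ C i
      · exact Or.inl hpC
      · exact Or.inr (Finset.mem_filter.2 ⟨Finset.mem_univ p, hpC, v, hvC, hp⟩)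
  -- membership in univ \ I splits across the S i
  have hcond : ∀ (P : V → Prop),
      (∀ v ∈ Finset.univ \ I, P v) ↔ ∀ i, ∀ v ∈ S i, P v := by
    intro P
    constructor
    · intro h i v hv
      apply h
      refine Finset.mem_sdiff.2 ⟨Finset.mem_univ v, ?_⟩
      by_cases hij : i = j
      · rw [hij, hS_pos] at hv
        exact (Finset.mem_sdiff.1 hv).2
      · intro hvI
        rw [hS_neg i hij] at hv
        exact (Finset.disjoint_left.1 (hdisj i j hij) hv) (hIj hvI)
    · intro h v hv
      have hvI : v ∉ I := (Finset.mem_sdiff.1 hv).2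
      by_cases hij : idx v = j
      · refine h j v ?_
        rw [hS_pos]
        exact Finset.mem_sdiff.2 ⟨hij ▸ hidx v, hvI⟩
      · refine h (idx v) v ?_
        rw [hS_neg _ hij]
        exact hidx v
  -- the left-hand side
  have hLHS : M.Pm I y (Finset.univ \ I) y
      = ∑ ω : M.L → M.NVal, (∏ i, g i ω) * M.μ ω := by
    rw [Pm_eq_sum M I (Finset.univ \ I) y
      (fun v hv => (Finset.mem_sdiff.1 hv).2)
      (fun v _ p _ => by
        by_cases hpI : p ∈ I
        · exact Or.inr hpI
        · exact Or.inl (Finset.mem_sdiff.2 ⟨Finset.mem_univ p, hpI⟩))]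
    refine Finset.sum_congr rfl fun ω _ => ?_
    simp only [hg_def]
    rw [prod_ite_one (fun i => ∀ v ∈ S i, M.f v y ω = y v)]
    by_cases h : ∀ v ∈ Finset.univ \ I, M.f v y ω = y v
    · rw [if_pos h, if_pos ((hcond _).1 h), one_mul]
    · rw [if_neg h, if_neg (fun hc => h ((hcond _).2 hc)), zero_mul]
  -- each factor of the right-hand side
  have hfac : ∀ i, M.Pm (J i) y (S i) y = ∑ ω : M.L → M.NVal, g i ω * M.μ ω := by
    intro i
    rw [Pm_eq_sum M (J i) (S i) y (hSJ i) (hpar i)]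
    refine Finset.sum_congr rfl fun ω _ => ?_
    simp only [hg_def]
    by_cases h : ∀ v ∈ S i, M.f v y ω = y v
    · rw [if_pos h, if_pos h, one_mul]
    · rw [if_neg h, if_neg h, zero_mul]
  rw [hLHS, indep_prod M κ g hdep,
    ← Finset.mul_prod_erase Finset.univ _ (Finset.mem_univ j)]
  congr 1
  · rw [← hfac j, hS_pos, hJ_pos]
  · refine Finset.prod_congr rfl fun i hi => ?_
    have hne : i ≠ j := (Finset.mem_erase.1 hi).1
    rw [← hfac i, hS_neg i hne, hJ_neg i hne]
end
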